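/- arXiv:2209.14278 — 3 statements merged into one kernel-verified Lean document; each statement's English description precedes it below -/
import Mathlib

section
/- Let L ∈ ℕ and let A : ℝ → ℂ be given by A(x) = Σ_{j=−2L}^{2L} a_j e^{ijx/2} with coefficients a_j ∈ ℂ, and suppose that A(x) is real and A(x) ≥ 0 for every x ∈ ℝ. Then there exist complex numbers q_{−L}, …, q_L such that the Laurent polynomial Q(x) = Σ_{j=−L}^{L} q_j e^{ijx/2} satisfies Q(x)·conj(Q(x)) = A(x) for all x ∈ ℝ. -/
open Complex Polynomial

noncomputable def e (t : ℝ) : ℂ := Complex.exp (t * Complex.I)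

lemma e_ne (t : ℝ) : e t ≠ 0 := Complex.exp_ne_zero _

lemma e_star (t : ℝ) : (starRingEnd ℂ) (e t) = (e t)⁻¹ := by
  rw [e, ← Complex.exp_conj, ← Complex.exp_neg]
  congr 1
  simp

lemma e_mul_star (t : ℝ) : e t * (starRingEnd ℂ) (e t) = 1 := by
  rw [e_star, mul_inv_cancel₀ (e_ne t)]

lemma e_add (s t : ℝ) : e (s + t) = e s * e t := by
  rw [e, e, e, ← Complex.exp_add]; push_cast; ring_nf

lemma e_pow (t : ℝ) (k : ℕ) : e t ^ k = e (k * t) := by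
  rw [e, e, ← Complex.exp_nat_mul]; push_cast; ring_nf

lemma e_inj_Ioo {s t : ℝ} (hs : s ∈ Set.Ioo (0:ℝ) 1) (ht : t ∈ Set.Ioo (0:ℝ) 1)
    (h : e s = e t) : s = t := by
  rw [e, e, Complex.exp_eq_exp_iff_exists_int] at h
  obtain ⟨k, hk⟩ := h
  have him : s = t + k * (2 * Real.pi) := by
    have := congrArg Complex.im hk
    simpa using this
  have hpi := Real.pi_gt_three
  rcases lt_trichotomy k 0 with h | h | h
  · exfalso
    have : (k : ℝ) ≤ -1 := by exact_mod_cast (by omega : k ≤ -1)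
    nlinarith [hs.1, hs.2, ht.1, ht.2]
  · simp [h] at him; linarith
  · exfalso
    have : (1 : ℝ) ≤ (k : ℝ) := by exact_mod_cast h
    nlinarith [hs.1, hs.2, ht.1, ht.2]

lemma poly_eq_of_circle (p q : Polynomial ℂ) (h : ∀ t : ℝ, p.eval (e t) = q.eval (e t)) :
    p = q := by
  have : (p - q) = 0 := by
    apply Polynomial.eq_zero_of_infinite_isRoot
    apply Set.Infinite.mono (s := e '' (Set.Ioo (0:ℝ) 1))
    · rintro z ⟨t, _, rfl⟩
      simp [Polynomial.IsRoot, h t]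
    · apply Set.Infinite.image
      · intro s hs t ht hst
        exact e_inj_Ioo hs ht hst
      · exact Set.Ioo_infinite (by norm_num)
  exact sub_eq_zero.mp this

noncomputable def rc (N : ℕ) (p : Polynomial ℂ) : Polynomial ℂ :=
  ∑ k ∈ Finset.range (N+1), Polynomial.C ((starRingEnd ℂ) (p.coeff (N - k))) * Polynomial.X ^ k

lemma rc_natDegree (N : ℕ) (p : Polynomial ℂ) : (rc N p).natDegree ≤ N := by
  apply Polynomial.natDegree_sum_le_of_forall_le
  intro k hk
  refine le_trans (Polynomial.natDegree_C_mul_le _ _) ?_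
  simpa using Nat.lt_succ_iff.mp (Finset.mem_range.mp hk)

lemma rc_coeff (N : ℕ) (p : Polynomial ℂ) (k : ℕ) (hk : k ≤ N) :
    (rc N p).coeff k = (starRingEnd ℂ) (p.coeff (N - k)) := by
  rw [rc, Polynomial.finset_sum_coeff]
  rw [Finset.sum_eq_single k]
  · simp
  · intro b _ hb
    simp [Polynomial.coeff_C_mul, Polynomial.coeff_X_pow, hb, Ne.symm hb]
  · intro h
    exact absurd (Finset.mem_range.mpr (Nat.lt_succ_of_le hk)) h

lemma rc_eval (N : ℕ) (p : Polynomial ℂ) (hp : p.natDegree ≤ N) {w : ℂ} (hw : w ≠ 0) :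
    (rc N p).eval w = w ^ N * (starRingEnd ℂ) (p.eval ((starRingEnd ℂ) w)⁻¹) := by
  have hev : p.eval ((starRingEnd ℂ) w)⁻¹ =
      ∑ j ∈ Finset.range (N+1), p.coeff j * ((starRingEnd ℂ) w)⁻¹ ^ j :=
    Polynomial.eval_eq_sum_range' (Nat.lt_succ_of_le hp) _
  rw [hev]
  rw [rc]
  rw [Polynomial.eval_finset_sum]
  simp only [Polynomial.eval_mul, Polynomial.eval_C, Polynomial.eval_pow, Polynomial.eval_X]
  rw [← Finset.sum_range_reflect]
  simp only [Nat.add_sub_cancel]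
  rw [map_sum, Finset.mul_sum]
  apply Finset.sum_congr rfl
  intro j hj
  have hj' : j ≤ N := Nat.lt_succ_iff.mp (Finset.mem_range.mp hj)
  have h1 : N - (N - j) = j := Nat.sub_sub_self hj'
  rw [h1]
  rw [map_mul, map_pow]
  have h2 : (starRingEnd ℂ) ((starRingEnd ℂ) w)⁻¹ = w⁻¹ := by
    rw [map_inv₀]; simp
  rw [h2]
  rw [pow_sub₀ w hw hj', inv_pow]
  ring

lemma sym_of_real (n : ℕ) (p : Polynomial ℂ) (hp : p.natDegree ≤ 2*n)
    (hv : ∀ t : ℝ, ∃ v : ℝ, 0 ≤ v ∧ p.eval (e t) = e (n*t) * v) :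
    rc (2*n) p = p := by
  apply poly_eq_of_circle
  intro t
  obtain ⟨v, _, hvt⟩ := hv t
  rw [rc_eval (2*n) p hp (e_ne t)]
  rw [e_star, inv_inv, hvt]
  rw [map_mul, Complex.conj_ofReal]
  have h1 : (starRingEnd ℂ) (e (n*t)) = (e (n*t))⁻¹ := e_star _
  rw [h1]
  rw [e_pow]
  have h2 : ((2*n : ℕ) : ℝ) * t = n*t + n*t := by push_cast; ring
  rw [h2, e_add]
  field_simp [e_ne]

lemma dense_ne (r : ℂ) : Dense {t : ℝ | e t ≠ r} := by
  have hc : {t : ℝ | e t = r}.Countable := by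
    by_cases hex : ∃ t₀ : ℝ, e t₀ = r
    · obtain ⟨t₀, ht₀⟩ := hex
      apply Set.Countable.mono (s₂ := Set.range (fun k : ℤ => t₀ + k * (2 * Real.pi)))
      · intro t ht
        simp only [Set.mem_setOf_eq] at ht
        rw [← ht₀, e, e, Complex.exp_eq_exp_iff_exists_int] at ht
        obtain ⟨k, hk⟩ := ht
        refine ⟨k, ?_⟩
        have := congrArg Complex.im hk
        simp at this
        simp [this]
      · exact Set.countable_range _
    · convert Set.countable_empty
      push_neg at hex
      exact Set.eq_empty_iff_forall_notMem.mpr fun t ht => hex t ht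
  exact hc.dense_compl ℝ

lemma real_nonneg_of_dense (g : ℝ → ℂ) (hg : Continuous g) (S : Set ℝ) (hS : Dense S)
    (h : ∀ t ∈ S, ∃ v : ℝ, 0 ≤ v ∧ g t = v) : ∀ t : ℝ, ∃ v : ℝ, 0 ≤ v ∧ g t = v := by
  have him : ∀ t, (g t).im = 0 := by
    have : Set.EqOn (fun t => (g t).im) (fun _ => (0:ℝ)) S := by
      intro t ht
      obtain ⟨v, _, hv⟩ := h t ht
      simp [hv]
    have := Continuous.ext_on hS (Complex.continuous_im.comp hg) continuous_const this
    exact fun t => congrFun this t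
  have hre : ∀ t, 0 ≤ (g t).re := by
    have hcl : IsClosed {t : ℝ | 0 ≤ (g t).re} :=
      isClosed_le continuous_const (Complex.continuous_re.comp hg)
    have hsub : S ⊆ {t : ℝ | 0 ≤ (g t).re} := by
      intro t ht
      obtain ⟨v, hv0, hv⟩ := h t ht
      simp [hv, hv0]
    intro t
    have : closure S ⊆ {t : ℝ | 0 ≤ (g t).re} := hcl.closure_subset_iff.mpr hsub
    exact this (hS.closure_eq ▸ Set.mem_univ t)
  intro t
  exact ⟨(g t).re, hre t, Complex.ext (by simp) (by simp [him t])⟩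

lemma cont_e : Continuous e := by
  unfold e; continuity

lemma double_root (n : ℕ) (p₁ : Polynomial ℂ) (t₀ : ℝ)
    (hv : ∀ t : ℝ, ∃ v : ℝ, 0 ≤ v ∧ (e t - e t₀) * p₁.eval (e t) = e (n*t) * v) :
    p₁.eval (e t₀) = 0 := by
  by_contra hne
  have h1 : HasDerivAt (fun t : ℝ => (t : ℂ)) 1 t₀ := by
    simpa using (hasDerivAt_id t₀).ofReal_comp
  have hd : HasDerivAt e (e t₀ * Complex.I) t₀ := by
    have := (h1.mul_const Complex.I).cexp
    rw [show e = fun t : ℝ => Complex.exp (t * Complex.I) from rfl]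
    simpa [e] using this
  have hslope : Filter.Tendsto (slope e t₀) (nhdsWithin t₀ {t₀}ᶜ) (nhds (e t₀ * Complex.I)) :=
    hasDerivAt_iff_tendsto_slope.mp hd
  have cont1 : Continuous fun t : ℝ => (e ((n:ℝ)*t))⁻¹ := by
    apply Continuous.inv₀
    · exact cont_e.comp (continuous_const.mul continuous_id)
    · exact fun t => e_ne _
  have cont2 : Continuous fun t : ℝ => p₁.eval (e t) := p₁.continuous.comp cont_e
  set c : ℂ := (e ((n:ℝ)*t₀))⁻¹ * p₁.eval (e t₀) * (e t₀ * Complex.I) with hc_def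
  set g : ℝ → ℂ := fun t => (e ((n:ℝ)*t))⁻¹ * p₁.eval (e t) * slope e t₀ t with hg_def
  have hc : Filter.Tendsto g (nhdsWithin t₀ {t₀}ᶜ) (nhds c) := by
    exact (((cont1.tendsto t₀).mono_left nhdsWithin_le_nhds).mul
      ((cont2.tendsto t₀).mono_left nhdsWithin_le_nhds)).mul hslope
  have key : ∀ t : ℝ, t ≠ t₀ → ∃ v : ℝ, 0 ≤ v ∧ g t = ((v / (t - t₀) : ℝ) : ℂ) := by
    intro t ht
    obtain ⟨v, hv0, hveq⟩ := hv t
    refine ⟨v, hv0, ?_⟩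
    have hsl : slope e t₀ t = ((t - t₀ : ℝ) : ℂ)⁻¹ * (e t - e t₀) := by
      rw [slope_def_module, Complex.real_smul, Complex.ofReal_inv]
    rw [hg_def]
    simp only
    rw [hsl]
    have : (e ((n:ℝ)*t))⁻¹ * p₁.eval (e t) * (((t - t₀ : ℝ) : ℂ)⁻¹ * (e t - e t₀)) =
        ((t - t₀ : ℝ) : ℂ)⁻¹ * ((e ((n:ℝ)*t))⁻¹ * ((e t - e t₀) * p₁.eval (e t))) := by ring
    rw [this, hveq]
    have ht' : ((t:ℂ) - (t₀:ℂ)) ≠ 0 := by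
      rw [← Complex.ofReal_sub]
      exact_mod_cast Complex.ofReal_ne_zero.mpr (sub_ne_zero.mpr ht)
    push_cast
    field_simp [e_ne]
  -- imaginary part
  have him : c.im = 0 := by
    have h2 : Filter.Tendsto (fun t => (g t).im) (nhdsWithin t₀ {t₀}ᶜ) (nhds c.im) :=
      (Complex.continuous_im.tendsto c).comp hc
    have h3 : Filter.Tendsto (fun t => (g t).im) (nhdsWithin t₀ {t₀}ᶜ) (nhds 0) := by
      apply Filter.Tendsto.congr' _ tendsto_const_nhds
      filter_upwards [self_mem_nhdsWithin] with t ht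
      obtain ⟨v, _, hgv⟩ := key t ht
      rw [hgv]
      exact (Complex.ofReal_im _).symm
    exact tendsto_nhds_unique h2 h3
  have hge : 0 ≤ c.re := by
    have h2 : Filter.Tendsto (fun t => (g t).re) (nhdsWithin t₀ (Set.Ioi t₀)) (nhds c.re) :=
      ((Complex.continuous_re.tendsto c).comp hc).mono_left
        (nhdsWithin_mono _ (fun t ht => ne_of_gt ht))
    apply ge_of_tendsto h2
    filter_upwards [self_mem_nhdsWithin] with t ht
    obtain ⟨v, hv0, hgv⟩ := key t (ne_of_gt ht)
    rw [hgv]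
    simp only [Complex.ofReal_re]
    exact div_nonneg hv0 (by simp at ht; linarith)
  have hle : c.re ≤ 0 := by
    have h2 : Filter.Tendsto (fun t => (g t).re) (nhdsWithin t₀ (Set.Iio t₀)) (nhds c.re) :=
      ((Complex.continuous_re.tendsto c).comp hc).mono_left
        (nhdsWithin_mono _ (fun t ht => ne_of_lt ht))
    apply le_of_tendsto h2
    filter_upwards [self_mem_nhdsWithin] with t ht
    obtain ⟨v, hv0, hgv⟩ := key t (ne_of_lt ht)
    rw [hgv]
    simp only [Complex.ofReal_re]
    exact div_nonpos_of_nonneg_of_nonpos hv0 (by simp at ht; linarith)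
  have hc0 : c = 0 := by
    apply Complex.ext
    · simp; linarith
    · simpa using him
  rw [hc_def] at hc0
  have : p₁.eval (e t₀) = 0 := by
    have h4 := mul_ne_zero (mul_ne_zero (inv_ne_zero (e_ne ((n:ℝ)*t₀))) hne)
      (mul_ne_zero (e_ne t₀) Complex.I_ne_zero)
    exact absurd hc0 h4
  exact hne this

lemma circ_id (r : ℂ) (hr : r ≠ 0) (t : ℝ) :
    e t - ((starRingEnd ℂ) r)⁻¹ = -(e t * ((starRingEnd ℂ) r)⁻¹) * (starRingEnd ℂ) (e t - r) := by
  rw [map_sub, e_star]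
  have h1 : (starRingEnd ℂ) r ≠ 0 := by simpa using hr
  field_simp [e_ne]
  ring

lemma main_lemma : ∀ n : ℕ, ∀ p : Polynomial ℂ, p.natDegree ≤ 2*n →
    (∀ t : ℝ, ∃ v : ℝ, 0 ≤ v ∧ p.eval (e t) = e ((n:ℝ)*t) * v) →
    ∃ c : Polynomial ℂ, c.natDegree ≤ n ∧ ∀ t : ℝ,
      p.eval (e t) = e ((n:ℝ)*t) * (c.eval (e t) * (starRingEnd ℂ) (c.eval (e t))) := by
  intro n
  induction n using Nat.strong_induction_on with
  | _ n IH =>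
  intro p hdeg hv
  by_cases hp0 : p = 0
  · exact ⟨0, by simp, fun t => by simp [hp0]⟩
  have hsym : rc (2*n) p = p := sym_of_real n p hdeg hv
  by_cases hn0 : n = 0
  · subst hn0
    have hpc : p = Polynomial.C (p.coeff 0) :=
      Polynomial.eq_C_of_natDegree_le_zero (by simpa using hdeg)
    obtain ⟨v, hv0, hveq⟩ := hv 0
    have hb : p.coeff 0 = (v : ℂ) := by
      have := hveq
      rw [hpc] at this
      simpa [e, Complex.exp_zero] using this
    refine ⟨Polynomial.C (Real.sqrt v), by simp, fun t => ?_⟩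
    rw [hpc, hb]
    simp only [Polynomial.eval_C]
    rw [Complex.conj_ofReal]
    have : ((Real.sqrt v : ℝ) : ℂ) * ((Real.sqrt v : ℝ) : ℂ) = ((v:ℝ):ℂ) := by
      rw [← Complex.ofReal_mul, Real.mul_self_sqrt hv0]
    rw [this]
    simp [e]
  -- n ≥ 1
  have hn1 : 1 ≤ n := Nat.one_le_iff_ne_zero.mpr hn0
  have hdpos : 0 < p.natDegree := by
    rcases Nat.eq_zero_or_pos p.natDegree with h | h
    · exfalso
      have hpc : p = Polynomial.C (p.coeff 0) := Polynomial.eq_C_of_natDegree_le_zero h.le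
      obtain ⟨v0, hv00, hveq0⟩ := hv 0
      obtain ⟨v1, hv10, hveq1⟩ := hv (Real.pi / n)
      have h0 : p.coeff 0 = (v0 : ℂ) := by
        rw [hpc] at hveq0
        simpa [e, Complex.exp_zero] using hveq0
      have h1 : p.coeff 0 = -(v1 : ℂ) := by
        rw [hpc] at hveq1
        have harg : (n:ℝ) * (Real.pi / n) = Real.pi := by
          field_simp
        rw [harg] at hveq1
        have : e Real.pi = -1 := by
          rw [e]; exact_mod_cast Complex.exp_pi_mul_I
        rw [this] at hveq1
        simpa using hveq1
      have : (v0 : ℂ) = -(v1 : ℂ) := h0 ▸ h1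
      have hv01 : v0 = -v1 := by exact_mod_cast this
      have : v0 = 0 := by linarith
      have : p.coeff 0 = 0 := by rw [h0, this]; simp
      exact hp0 (by rw [hpc, this, map_zero])
    · exact h
  obtain ⟨r, hr⟩ : ∃ r : ℂ, p.IsRoot r :=
    Complex.exists_root (Polynomial.natDegree_pos_iff_degree_pos.mp hdpos)
  by_cases hr0 : r = 0
  · -- zero root case
    subst hr0
    have hc0 : p.coeff 0 = 0 := by
      rw [Polynomial.coeff_zero_eq_eval_zero]; exact hr
    have hc2n : p.coeff (2*n) = 0 := by
      have := congrArg (fun q => Polynomial.coeff q (2*n)) hsym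
      rw [rc_coeff (2*n) p (2*n) le_rfl] at this
      rw [← this]
      simp [hc0]
    have hdlt : p.natDegree ≤ 2*n - 1 := by
      by_contra hcon
      push_neg at hcon
      have : p.natDegree = 2*n := by omega
      have := Polynomial.leadingCoeff_ne_zero.mpr hp0
      rw [Polynomial.leadingCoeff] at this
      rw [‹p.natDegree = 2*n›] at this
      exact this hc2n
    have hXd : p = Polynomial.X * p.divX := by
      have := p.X_mul_divX_add
      rw [hc0] at this
      simpa using this.symm
    have hdivdeg : p.divX.natDegree ≤ 2*(n-1) := by
      rw [Polynomial.natDegree_divX_eq_natDegree_tsub_one]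
      omega
    have hv' : ∀ t : ℝ, ∃ v : ℝ, 0 ≤ v ∧ p.divX.eval (e t) = e (((n-1:ℕ):ℝ)*t) * v := by
      intro t
      obtain ⟨v, hv0, hveq⟩ := hv t
      refine ⟨v, hv0, ?_⟩
      rw [hXd] at hveq
      simp only [Polynomial.eval_mul, Polynomial.eval_X] at hveq
      have hsplit : ((n:ℝ)) * t = t + ((n-1:ℕ):ℝ) * t := by
        have : ((n-1:ℕ):ℝ) = (n:ℝ) - 1 := by
          push_cast [Nat.cast_sub hn1]; ring
        rw [this]; ring
      rw [hsplit, e_add] at hveq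
      exact mul_left_cancel₀ (e_ne t)
        (by linear_combination hveq :
          e t * p.divX.eval (e t) = e t * (e (((n-1:ℕ):ℝ)*t) * v))
    obtain ⟨c, hcdeg, hceq⟩ := IH (n-1) (by omega) p.divX hdivdeg hv'
    refine ⟨c, le_trans hcdeg (by omega), fun t => ?_⟩
    rw [hXd]
    simp only [Polynomial.eval_mul, Polynomial.eval_X]
    rw [hceq t]
    have hsplit : ((n:ℝ)) * t = t + ((n-1:ℕ):ℝ) * t := by
      have : ((n-1:ℕ):ℝ) = (n:ℝ) - 1 := by
        push_cast [Nat.cast_sub hn1]; ring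
      rw [this]; ring
    rw [hsplit, e_add]
    ring
  · -- nonzero root case
    have hstar : (starRingEnd ℂ) r ≠ 0 := by simpa using hr0
    set s : ℂ := ((starRingEnd ℂ) r)⁻¹ with hs_def
    have hs0 : s ≠ 0 := inv_ne_zero hstar
    obtain ⟨p₁, hfac⟩ := Polynomial.dvd_iff_isRoot.mpr hr
    have hsplit : ∀ t : ℝ, ((n:ℝ)) * t = t + ((n-1:ℕ):ℝ) * t := by
      intro t
      have : ((n-1:ℕ):ℝ) = (n:ℝ) - 1 := by push_cast [Nat.cast_sub hn1]; ring
      rw [this]; ring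
    have hps : p₁.IsRoot s := by
      by_cases hrs : s = r
      · -- double root on circle
        have hrr : r * (starRingEnd ℂ) r = 1 := by
          have := hrs
          rw [hs_def] at this
          field_simp at this
          linear_combination -this
        have habs : (‖r‖ : ℝ) = 1 := by
          have h2 : (Complex.normSq r : ℂ) = 1 := by
            rw [← Complex.mul_conj]; exact hrr
          have h3 : Complex.normSq r = 1 := by exact_mod_cast h2
          have := Complex.sq_norm r
          nlinarith [norm_nonneg r]
        have hre : e (Complex.arg r) = r := by
          have h4 := Complex.norm_mul_exp_arg_mul_I r
          rw [habs] at h4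
          simpa [e] using h4
        rw [Polynomial.IsRoot, hrs, ← hre]
        apply double_root n p₁ (Complex.arg r)
        intro t
        obtain ⟨v, hv0, hveq⟩ := hv t
        refine ⟨v, hv0, ?_⟩
        rw [hfac] at hveq
        simp only [Polynomial.eval_mul, Polynomial.eval_sub, Polynomial.eval_X,
          Polynomial.eval_C] at hveq
        rw [hre]
        exact hveq
      · -- s ≠ r : s is also a root of p
        have hpev : p.eval s = 0 := by
          rw [← hsym, rc_eval (2*n) p hdeg hs0]
          have h2 : ((starRingEnd ℂ) s)⁻¹ = r := by
            rw [hs_def, map_inv₀, inv_inv]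
            simp
          rw [h2, show p.eval r = 0 from hr]
          simp
        rw [hfac] at hpev
        simp only [Polynomial.eval_mul, Polynomial.eval_sub, Polynomial.eval_X,
          Polynomial.eval_C] at hpev
        rcases mul_eq_zero.mp hpev with h | h
        · exact absurd (by linear_combination h) hrs
        · exact h
    obtain ⟨h, hfac2⟩ := Polynomial.dvd_iff_isRoot.mpr hps
    have hXr : (Polynomial.X - Polynomial.C r) ≠ 0 := Polynomial.X_sub_C_ne_zero r
    have hXs : (Polynomial.X - Polynomial.C s) ≠ 0 := Polynomial.X_sub_C_ne_zero s
    have hp₁0 : p₁ ≠ 0 := fun hh => hp0 (by rw [hfac, hh, mul_zero])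
    have hh0 : h ≠ 0 := fun hh => hp₁0 (by rw [hfac2, hh, mul_zero])
    have hdeg_p : p.natDegree = 1 + (1 + h.natDegree) := by
      rw [hfac, Polynomial.natDegree_mul hXr hp₁0, Polynomial.natDegree_X_sub_C]
      rw [hfac2, Polynomial.natDegree_mul hXs hh0, Polynomial.natDegree_X_sub_C]
    have hhdeg : h.natDegree ≤ 2*(n-1) := by omega
    set p₂ : Polynomial ℂ := Polynomial.C (-s) * h with hp2_def
    have hp2deg : p₂.natDegree ≤ 2*(n-1) :=
      le_trans (Polynomial.natDegree_C_mul_le _ _) hhdeg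
    have hkey : ∀ t : ℝ, p.eval (e t) =
        e t * ((e t - r) * (starRingEnd ℂ) (e t - r)) * p₂.eval (e t) := by
      intro t
      rw [hfac, hfac2]
      simp only [Polynomial.eval_mul, Polynomial.eval_sub, Polynomial.eval_X,
        Polynomial.eval_C, hp2_def]
      rw [show e t - s = -(e t * s) * (starRingEnd ℂ) (e t - r) from circ_id r hr0 t]
      ring
    have hv₂ : ∀ t : ℝ, ∃ v : ℝ, 0 ≤ v ∧ p₂.eval (e t) = e (((n-1:ℕ):ℝ)*t) * v := by
      have hcont : Continuous fun t : ℝ => (e (((n-1:ℕ):ℝ)*t))⁻¹ * p₂.eval (e t) := by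
        apply Continuous.mul
        · exact Continuous.inv₀ (cont_e.comp (continuous_const.mul continuous_id))
            (fun t => e_ne _)
        · exact p₂.continuous.comp cont_e
      have hS : ∀ t ∈ {t : ℝ | e t ≠ r}, ∃ v : ℝ, 0 ≤ v ∧
          (e (((n-1:ℕ):ℝ)*t))⁻¹ * p₂.eval (e t) = v := by
        intro t ht
        obtain ⟨v, hv0, hveq⟩ := hv t
        have hns : Complex.normSq (e t - r) ≠ 0 :=
          by simpa [Complex.normSq_eq_zero] using (sub_ne_zero.mpr ht)
        refine ⟨v / Complex.normSq (e t - r),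
          div_nonneg hv0 (Complex.normSq_nonneg _), ?_⟩
        have h3 := (hkey t).symm.trans hveq
        rw [Complex.mul_conj] at h3
        rw [hsplit t, e_add] at h3
        have hns' : (Complex.normSq (e t - r) : ℂ) ≠ 0 := by exact_mod_cast hns
        push_cast [Nat.cast_sub hn1] at h3 ⊢
        have h4 := mul_left_cancel₀ (e_ne t)
          (show e t * ((Complex.normSq (e t - r) : ℂ) * p₂.eval (e t)) =
            e t * (e (((n:ℝ)-1)*t) * v) by linear_combination h3)
        rw [inv_mul_eq_div, div_eq_div_iff (e_ne _) hns']
        linear_combination h4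
      have hall := real_nonneg_of_dense _ hcont _ (dense_ne r) hS
      intro t
      obtain ⟨v, hv0, hgv⟩ := hall t
      refine ⟨v, hv0, ?_⟩
      rw [← hgv, ← mul_assoc, mul_inv_cancel₀ (e_ne _), one_mul]
    obtain ⟨c₁, hc₁deg, hc₁⟩ := IH (n-1) (by omega) p₂ hp2deg hv₂
    refine ⟨(Polynomial.X - Polynomial.C r) * c₁, ?_, fun t => ?_⟩
    · refine le_trans (Polynomial.natDegree_mul_le) ?_
      rw [Polynomial.natDegree_X_sub_C]
      omega
    · rw [hkey t, hc₁ t]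
      simp only [Polynomial.eval_mul, Polynomial.eval_sub, Polynomial.eval_X,
        Polynomial.eval_C, map_mul]
      rw [hsplit t, e_add]
      ring

lemma e_zpow (t : ℝ) (j : ℤ) : e t ^ j = Complex.exp (Complex.I * j * t) := by
  rw [e, ← Complex.exp_int_mul]
  congr 1
  push_cast
  ring

lemma sum_Icc_eq (M : ℕ) (f : ℤ → ℂ) :
    ∑ j ∈ Finset.Icc (-(M:ℤ)) (M:ℤ), f j = ∑ k ∈ Finset.range (2*M+1), f ((k:ℤ) - M) := by
  refine Finset.sum_nbij' (fun j => (j + M).toNat) (fun k => (k:ℤ) - M) ?_ ?_ ?_ ?_ ?_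
  · intro j hj
    simp only [Finset.mem_Icc] at hj
    simp only [Finset.mem_range]
    omega
  · intro k hk
    simp only [Finset.mem_range] at hk
    simp only [Finset.mem_Icc]
    omega
  · intro j hj
    simp only [Finset.mem_Icc] at hj
    show ((j + (M:ℤ)).toNat : ℤ) - (M:ℤ) = j
    omega
  · intro k hk
    simp only [Finset.mem_range] at hk
    show ((k:ℤ) - (M:ℤ) + (M:ℤ)).toNat = k
    omega
  · intro j hj
    simp only [Finset.mem_Icc] at hj
    show f j = f (((j + (M:ℤ)).toNat : ℤ) - (M:ℤ))
    congr 1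
    omega

/-- Fejér–Riesz type root decomposition for non-negative real-valued
Laurent polynomials in `ℂ[e^{ix/2}, e^{-ix/2}]`. -/
theorem stmt_0 (L : ℕ) (a : ℤ → ℂ) (A : ℝ → ℂ)
    (hA : ∀ x : ℝ, A x =
      ∑ j ∈ Finset.Icc (-(2 * L : ℤ)) (2 * L), a j * Complex.exp (Complex.I * j * x / 2))
    (hreal : ∀ x : ℝ, (A x).im = 0)
    (hnonneg : ∀ x : ℝ, 0 ≤ (A x).re) :
    ∃ q : ℤ → ℂ, ∀ x : ℝ,
      (∑ j ∈ Finset.Icc (-(L : ℤ)) (L : ℤ), q j * Complex.exp (Complex.I * j * x / 2)) *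
        (starRingEnd ℂ)
          (∑ j ∈ Finset.Icc (-(L : ℤ)) (L : ℤ), q j * Complex.exp (Complex.I * j * x / 2)) =
      A x := by
  classical
  set p : Polynomial ℂ :=
    ∑ k ∈ Finset.range (4*L+1), Polynomial.C (a ((k:ℤ) - 2*L)) * Polynomial.X ^ k with hp_def
  have hpdeg : p.natDegree ≤ 2*(2*L) := by
    apply Polynomial.natDegree_sum_le_of_forall_le
    intro k hk
    refine le_trans (Polynomial.natDegree_C_mul_le _ _) ?_
    simp only [Polynomial.natDegree_X_pow]
    have := Finset.mem_range.mp hk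
    omega
  have heval : ∀ t : ℝ, p.eval (e t) = e (((2*L:ℕ):ℝ)*t) * A (2*t) := by
    intro t
    rw [hA (2*t), hp_def]
    rw [Polynomial.eval_finset_sum]
    simp only [Polynomial.eval_mul, Polynomial.eval_C, Polynomial.eval_pow, Polynomial.eval_X]
    have hIcc : (Finset.Icc (-(2 * L : ℤ)) (2 * L)) = Finset.Icc (-((2*L:ℕ):ℤ)) ((2*L:ℕ):ℤ) := by
      norm_num
    rw [hIcc]
    rw [sum_Icc_eq (2*L) (fun j => a j * Complex.exp (Complex.I * j * ((2*t : ℝ) : ℂ) / 2))]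
    rw [show 2*(2*L)+1 = 4*L+1 by ring]
    rw [Finset.mul_sum]
    apply Finset.sum_congr rfl
    intro k _
    have h2 : Complex.exp (Complex.I * (((k:ℤ) - (2*L:ℕ) : ℤ) : ℂ) * ((2*t : ℝ) : ℂ) / 2) =
        e t ^ ((k:ℤ) - (2*L:ℕ)) := by
      rw [e_zpow]
      congr 1
      push_cast
      ring
    have h3 : e (((2*L:ℕ):ℝ)*t) = e t ^ ((2*L:ℕ):ℤ) := by
      rw [e_zpow, e]
      congr 1
      push_cast
      ring
    rw [h2, h3]
    rw [← zpow_natCast (e t) k]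
    rw [show (k:ℤ) = ((2*L:ℕ):ℤ) + ((k:ℤ) - (2*L:ℕ)) by ring]
    rw [zpow_add₀ (e_ne t)]
    push_cast
    ring
  have hv : ∀ t : ℝ, ∃ v : ℝ, 0 ≤ v ∧ p.eval (e t) = e (((2*L:ℕ):ℝ)*t) * v := by
    intro t
    refine ⟨(A (2*t)).re, hnonneg _, ?_⟩
    rw [heval t]
    congr 1
    exact Complex.ext rfl (hreal (2*t))
  obtain ⟨c, hcdeg, hc⟩ := main_lemma (2*L) p hpdeg hv
  refine ⟨fun j => if hj : 0 ≤ j + L then c.coeff (j + L).toNat else 0, fun x => ?_⟩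
  set t : ℝ := x / 2 with ht_def
  have hx : (2 : ℝ) * t = x := by rw [ht_def]; ring
  have hQ : (∑ j ∈ Finset.Icc (-(L : ℤ)) (L : ℤ),
      (if hj : 0 ≤ j + L then c.coeff (j + L).toNat else 0) *
        Complex.exp (Complex.I * j * x / 2)) = e t ^ (-(L:ℤ)) * c.eval (e t) := by
    have hIccL : (Finset.Icc (-(L : ℤ)) (L:ℤ)) = Finset.Icc (-((L:ℕ):ℤ)) ((L:ℕ):ℤ) := rfl
    rw [hIccL]
    rw [sum_Icc_eq L (fun j => (if hj : 0 ≤ j + L then c.coeff (j + L).toNat else 0) *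
      Complex.exp (Complex.I * j * x / 2))]
    have hev : c.eval (e t) = ∑ k ∈ Finset.range (2*L+1), c.coeff k * (e t)^k :=
      Polynomial.eval_eq_sum_range' (by omega) _
    rw [hev, Finset.mul_sum]
    apply Finset.sum_congr rfl
    intro k hk
    have hge : (0:ℤ) ≤ ((k:ℤ) - (L:ℕ)) + L := by push_cast; omega
    rw [dif_pos hge]
    have htn : (((k:ℤ) - (L:ℕ)) + L).toNat = k := by omega
    rw [htn]
    have h2 : Complex.exp (Complex.I * (((k:ℤ) - (L:ℕ) : ℤ) : ℂ) * (x : ℂ) / 2) =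
        e t ^ ((k:ℤ) - (L:ℕ)) := by
      rw [e_zpow]
      congr 1
      rw [ht_def]
      push_cast
      ring
    rw [h2]
    rw [← zpow_natCast (e t) k]
    rw [show ((k:ℤ) - (L:ℕ)) = (-(L:ℤ)) + (k:ℤ) by push_cast; ring]
    rw [zpow_add₀ (e_ne t)]
    ring
  rw [hQ]
  rw [map_mul]
  have hstar_zpow : (starRingEnd ℂ) (e t ^ (-(L:ℤ))) = (e t)⁻¹ ^ (-(L:ℤ)) := by
    rw [map_zpow₀, e_star]
  rw [hstar_zpow]
  have hone : e t ^ (-(L:ℤ)) * ((e t)⁻¹ ^ (-(L:ℤ))) = 1 := by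
    rw [← mul_zpow, mul_inv_cancel₀ (e_ne t), one_zpow]
  have hAx : A x = A (2*t) := by rw [hx]
  rw [hAx]
  have hfin := hc t
  rw [heval t] at hfin
  have hA2 : A (2*t) = c.eval (e t) * (starRingEnd ℂ) (c.eval (e t)) :=
    mul_left_cancel₀ (e_ne _) hfin
  calc e t ^ (-(L:ℤ)) * c.eval (e t) * ((e t)⁻¹ ^ (-(L:ℤ)) * (starRingEnd ℂ) (c.eval (e t)))
      = (e t ^ (-(L:ℤ)) * ((e t)⁻¹ ^ (-(L:ℤ)))) *
        (c.eval (e t) * (starRingEnd ℂ) (c.eval (e t))) := by ring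
    _ = A (2*t) := by rw [hone, one_mul, hA2]
end

section
/- Let L ∈ ℕ and let P ∈ ℂ[e^{ix/2}, e^{−ix/2}] be a Laurent polynomial of degree at most L with parity L mod 2. Then |P(x)| ≤ 1 for all x ∈ ℝ if and only if there exists a Laurent polynomial Q ∈ ℂ[e^{ix/2}, e^{−ix/2}] of degree at most L, with parity L mod 2, such that |P(x)|² + |Q(x)|² = 1 for all x ∈ ℝ. -/
open Polynomial Complex

lemma fr_eval_reflect (N : ℕ) (f : ℂ[X]) (hf : f.natDegree ≤ N) (z : ℂ) (hz : z ≠ 0) :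
    (reflect N f).eval z⁻¹ * z ^ N = f.eval z := by
  letI := invertibleOfNonzero hz
  have h := eval₂_reflect_mul_pow (RingHom.id ℂ) z N f hf
  simpa [eval₂_eq_eval_map, invOf_eq_inv] using h

lemma fr_eval_map_conj (f : ℂ[X]) (z : ℂ) :
    (f.map (starRingEnd ℂ)).eval z = starRingEnd ℂ (f.eval (starRingEnd ℂ z)) := by
  induction f using Polynomial.induction_on with
  | C a => simp
  | add p q hp hq => simp [hp, hq]
  | monomial n a h =>
    simp only [Polynomial.map_mul, Polynomial.map_C, Polynomial.map_pow, Polynomial.map_X,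
      eval_mul, eval_C, eval_pow, eval_X, map_mul, map_pow, Complex.conj_conj]

lemma fr_hasDerivAt (f : ℂ[X]) (a : ℂ) (x : ℝ) :
    HasDerivAt (fun y : ℝ => f.eval (Complex.exp (a * y)))
      (f.derivative.eval (Complex.exp (a * x)) * (Complex.exp (a * x) * a)) x := by
  have h1 : HasDerivAt (fun y : ℝ => (y : ℂ)) 1 x := by
    simpa using (hasDerivAt_id x).ofReal_comp
  have h3 : HasDerivAt (fun y : ℝ => Complex.exp (a * y)) (Complex.exp (a * x) * (a * 1)) x :=
    (h1.const_mul a).cexp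
  have h4 := (f.hasDerivAt (Complex.exp (a * x))).comp
    (h := fun y : ℝ => Complex.exp (a * y)) (x := x) h3
  rw [mul_one] at h4
  exact h4

lemma fr_hasDerivAt_exp (a : ℂ) (x : ℝ) :
    HasDerivAt (fun y : ℝ => Complex.exp (a * y)) (Complex.exp (a * x) * a) x := by
  have h1 : HasDerivAt (fun y : ℝ => (y : ℂ)) 1 x := by
    simpa using (hasDerivAt_id x).ofReal_comp
  simpa using (h1.const_mul a).cexp

lemma fr_exp_ne_one (y : ℝ) (h0 : 0 < y) (h1 : y < 1) :
    Complex.exp (Complex.I * y) ≠ 1 := by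
  intro h
  rw [Complex.exp_eq_one_iff] at h
  obtain ⟨n, hn⟩ := h
  have hc : Complex.I * (y : ℂ) = Complex.I * ((n : ℝ) * (2 * Real.pi) : ℝ) := by
    rw [hn]; push_cast; ring
  have h2 : y = (n : ℝ) * (2 * Real.pi) := by
    exact_mod_cast mul_left_cancel₀ Complex.I_ne_zero hc
  have hpi := Real.pi_gt_three
  rcases lt_trichotomy n 0 with h3 | h3 | h3
  · have : (n : ℝ) ≤ -1 := by exact_mod_cast (by omega : n ≤ -1)
    nlinarith
  · simp [h3] at h2; linarith
  · have : (1 : ℝ) ≤ (n : ℝ) := by exact_mod_cast h3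
    nlinarith

lemma fr_exp_inj : Set.InjOn (fun x : ℝ => Complex.exp (Complex.I * x)) (Set.Ioo 0 1) := by
  intro a ha b hb hab
  simp only at hab
  have h : Complex.exp (Complex.I * a - Complex.I * b) = 1 := by
    rw [Complex.exp_sub, hab, div_self (Complex.exp_ne_zero _)]
  rw [Complex.exp_eq_one_iff] at h
  obtain ⟨n, hn⟩ := h
  have hc : Complex.I * ((a : ℂ) - b) = Complex.I * ((n : ℝ) * (2 * Real.pi) : ℝ) := by
    rw [mul_sub, hn]; push_cast; ring
  have h2 : a - b = (n : ℝ) * (2 * Real.pi) := by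
    exact_mod_cast mul_left_cancel₀ Complex.I_ne_zero hc
  have hpi := Real.pi_gt_three
  rcases lt_trichotomy n 0 with h3 | h3 | h3
  · have : (n : ℝ) ≤ -1 := by exact_mod_cast (by omega : n ≤ -1)
    nlinarith [ha.1, ha.2, hb.1, hb.2]
  · simp [h3] at h2; linarith [sub_eq_zero.mp h2]
  · have : (1 : ℝ) ≤ (n : ℝ) := by exact_mod_cast h3
    nlinarith [ha.1, ha.2, hb.1, hb.2]

lemma fr_poly_eq_zero (f : ℂ[X])
    (h : ∀ x : ℝ, x ∈ Set.Ioo (0:ℝ) 1 → f.eval (Complex.exp (Complex.I * x)) = 0) : f = 0 := by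
  apply Polynomial.eq_zero_of_infinite_isRoot
  have hsub : (fun x : ℝ => Complex.exp (Complex.I * x)) '' (Set.Ioo 0 1) ⊆ {x | f.IsRoot x} := by
    rintro z ⟨x, hx, rfl⟩
    exact h x hx
  exact Set.Infinite.mono hsub ((Set.Ioo_infinite (by norm_num)).image fr_exp_inj)

lemma fr_conj_exp (x : ℝ) :
    (starRingEnd ℂ) (Complex.exp (Complex.I * x)) = (Complex.exp (Complex.I * x))⁻¹ := by
  rw [← Complex.exp_conj, ← Complex.exp_neg]
  congr 1
  simp [Complex.conj_I]

lemma fr_key2 (r s z : ℂ) (hr : r ≠ 0) (hrs : s * (starRingEnd ℂ) r = 1) (hz : z ≠ 0)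
    (hzu : (starRingEnd ℂ) z = z⁻¹) :
    (z - r) * (z - s) * ((starRingEnd ℂ) r) = -(z * ((Complex.normSq (z - r) : ℝ) : ℂ)) := by
  have hcr : (starRingEnd ℂ) r ≠ 0 := by simpa using hr
  have hs : s = ((starRingEnd ℂ) r)⁻¹ := eq_inv_of_mul_eq_one_left hrs
  have h := Complex.mul_conj (z - r)
  rw [← h, map_sub, hzu, hs]
  field_simp
  ring

lemma fr_main (n : ℕ) : ∀ d : ℂ[X], d.natDegree ≤ 2 * n →
    (∀ x : ℝ, ∃ t : ℝ, 0 ≤ t ∧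
      d.eval (Complex.exp (Complex.I * x)) = (t : ℂ) * Complex.exp (Complex.I * n * x)) →
    ∃ e : ℂ[X], e.natDegree ≤ n ∧ ∀ x : ℝ,
      d.eval (Complex.exp (Complex.I * x))
        = ((‖e.eval (Complex.exp (Complex.I * x))‖ : ℝ) : ℂ)^2
            * Complex.exp (Complex.I * n * x) := by
  induction n with
  | zero =>
    intro d hdeg hpos
    obtain ⟨t, ht, h0⟩ := hpos 0
    have hd : d = C (d.coeff 0) := eq_C_of_natDegree_le_zero (by simpa using hdeg)
    have hc : d.coeff 0 = (t : ℂ) := by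
      rw [hd] at h0
      simpa using h0
    refine ⟨C ((Real.sqrt t : ℝ) : ℂ), by simp, fun x => ?_⟩
    rw [hd, eval_C, eval_C, hc]
    have h2 : ((‖((Real.sqrt t : ℝ) : ℂ)‖ : ℝ) : ℂ)^2 = (t : ℂ) := by
      rw [Complex.norm_real, Real.norm_eq_abs]
      norm_cast
      rw [_root_.sq_abs, Real.sq_sqrt ht]
    rw [h2]
    simp
  | succ n IH =>
    intro d hdeg hpos
    by_cases hd0 : d = 0
    · exact ⟨0, by simp, fun x => by simp [hd0]⟩
    set N := 2 * (n + 1) with hN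
    have hmapdeg : (d.map (starRingEnd ℂ)).natDegree ≤ N := le_trans natDegree_map_le hdeg
    have hzx : ∀ x : ℝ, Complex.exp (Complex.I * x) ≠ 0 := fun x => Complex.exp_ne_zero _
    -- exponential splitting
    have hsplit : ∀ x : ℝ, Complex.exp (Complex.I * ((n:ℂ) + 1) * x)
        = Complex.exp (Complex.I * x) * Complex.exp (Complex.I * n * x) := by
      intro x
      rw [← Complex.exp_add]
      congr 1
      ring
    have hcast : ∀ x : ℝ, Complex.exp (Complex.I * ((n + 1 : ℕ) : ℂ) * x)
        = Complex.exp (Complex.I * ((n:ℂ) + 1) * x) := by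
      intro x; congr 2; push_cast; ring
    -- reflection evaluation
    have hrefl : ∀ x : ℝ, (reflect N (d.map (starRingEnd ℂ))).eval (Complex.exp (Complex.I * x))
        = (Complex.exp (Complex.I * x)) ^ N
            * (starRingEnd ℂ) (d.eval (Complex.exp (Complex.I * x))) := by
      intro x
      set z := Complex.exp (Complex.I * x) with hzdef
      have hzne : z ≠ 0 := hzx x
      have h1 := fr_eval_reflect N (d.map (starRingEnd ℂ)) hmapdeg z⁻¹ (inv_ne_zero hzne)
      rw [inv_inv] at h1
      have h2 : (d.map (starRingEnd ℂ)).eval z⁻¹ = (starRingEnd ℂ) (d.eval z) := by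
        rw [fr_eval_map_conj]
        congr 2
        rw [map_inv₀, fr_conj_exp x, inv_inv]
      rw [h2] at h1
      have hzN : z ^ N ≠ 0 := pow_ne_zero _ hzne
      have h3 : (reflect N (d.map (starRingEnd ℂ))).eval z * ((z⁻¹)^N * z^N)
          = (starRingEnd ℂ) (d.eval z) * z^N := by
        rw [← mul_assoc, h1]
      rw [inv_pow, inv_mul_cancel₀ hzN, mul_one] at h3
      rw [h3]; ring
    -- symmetry of d
    have hsym : d = reflect N (d.map (starRingEnd ℂ)) := by
      have h := fr_poly_eq_zero (d - reflect N (d.map (starRingEnd ℂ))) ?_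
      · exact sub_eq_zero.mp h
      intro x hx
      obtain ⟨t, ht, hu⟩ := hpos x
      rw [eval_sub, hrefl x, hu]
      have hconj : (starRingEnd ℂ) ((t:ℂ) * Complex.exp (Complex.I * ((n+1:ℕ):ℂ) * x))
          = (t:ℂ) * Complex.exp (-(Complex.I * ((n+1:ℕ):ℂ) * x)) := by
        rw [map_mul, Complex.conj_ofReal, ← Complex.exp_conj]
        congr 2
        simp [map_mul, Complex.conj_I]
      rw [hconj, ← Complex.exp_nat_mul]
      have hE : Complex.exp ((N:ℂ) * (Complex.I * x))
            * Complex.exp (-(Complex.I * ((n+1:ℕ):ℂ) * x))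
          = Complex.exp (Complex.I * ((n+1:ℕ):ℂ) * x) := by
        rw [← Complex.exp_add]
        congr 1
        rw [hN]
        push_cast
        ring
      linear_combination (-(t:ℂ)) * hE
    -- coefficient symmetry at the top
    have hcoeffN : d.coeff N = (starRingEnd ℂ) (d.coeff 0) := by
      conv_lhs => rw [hsym]
      rw [coeff_reflect, revAt_le (le_refl N)]
      simp [coeff_map]
    by_cases hc0 : d.coeff 0 = 0
    · -- X divides d
      obtain ⟨d₁, hd₁⟩ := X_dvd_iff.mpr hc0
      have hd₁0 : d₁ ≠ 0 := fun h => hd0 (by rw [hd₁, h, mul_zero])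
      have hdegd : d.natDegree < N := by
        rcases lt_or_eq_of_le hdeg with h | h
        · exact h
        · exfalso
          have hne : d.coeff N ≠ 0 := by
            rw [← h]
            exact leadingCoeff_ne_zero.mpr hd0
          rw [hcoeffN, hc0] at hne
          simp at hne
      have hdeg₁ : d₁.natDegree ≤ 2 * n := by
        have h1 : d.natDegree = 1 + d₁.natDegree := by
          rw [hd₁, natDegree_mul X_ne_zero hd₁0, natDegree_X]
        omega
      have hpos₁ : ∀ x : ℝ, ∃ t : ℝ, 0 ≤ t ∧
          d₁.eval (Complex.exp (Complex.I * x)) = (t:ℂ) * Complex.exp (Complex.I * n * x) := by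
        intro x
        obtain ⟨t, ht, hu⟩ := hpos x
        refine ⟨t, ht, ?_⟩
        rw [hd₁, eval_mul, eval_X, hcast x, hsplit x] at hu
        have h2 : Complex.exp (Complex.I * x) * d₁.eval (Complex.exp (Complex.I * x))
            = Complex.exp (Complex.I * x) * ((t:ℂ) * Complex.exp (Complex.I * n * x)) := by
          rw [hu]; ring
        exact mul_left_cancel₀ (hzx x) h2
      obtain ⟨e, hedeg, heq⟩ := IH d₁ hdeg₁ hpos₁
      refine ⟨e, le_trans hedeg (Nat.le_succ n), fun x => ?_⟩
      rw [hd₁, eval_mul, eval_X, heq x, hcast x, hsplit x]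
      ring
    · -- coeff 0 ≠ 0 : root-pairing case
      have hdegpos : 0 < d.natDegree := by
        rcases Nat.eq_zero_or_pos d.natDegree with h | h
        · exfalso
          have h2 : d.coeff N = 0 := coeff_eq_zero_of_natDegree_lt (by omega)
          rw [hcoeffN] at h2
          exact hc0 (by simpa using h2)
        · exact h
      obtain ⟨r, hr⟩ := Complex.exists_root (natDegree_pos_iff_degree_pos.mp hdegpos)
      have hrne : r ≠ 0 := by
        intro h
        subst h
        exact hc0 (by rw [coeff_zero_eq_eval_zero]; exact hr)
      have hcrne : (starRingEnd ℂ) r ≠ 0 := by simpa using hrne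
      set s : ℂ := ((starRingEnd ℂ) r)⁻¹ with hsdef
      have hsne : s ≠ 0 := inv_ne_zero hcrne
      have hscr : s * (starRingEnd ℂ) r = 1 := inv_mul_cancel₀ hcrne
      have hsroot : d.IsRoot s := by
        have h1 := fr_eval_reflect N (d.map (starRingEnd ℂ)) hmapdeg s⁻¹ (inv_ne_zero hsne)
        rw [inv_inv] at h1
        have h2 : (d.map (starRingEnd ℂ)).eval s⁻¹ = 0 := by
          rw [fr_eval_map_conj]
          have h3 : (starRingEnd ℂ) (s⁻¹) = r := by
            rw [hsdef, inv_inv]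
            simp
          rw [h3]
          simpa using hr
        rw [h2] at h1
        have h4 : (reflect N (d.map (starRingEnd ℂ))).eval s = 0 := by
          rcases mul_eq_zero.mp h1 with h | h
          · exact h
          · exact absurd h (pow_ne_zero _ (inv_ne_zero hsne))
        show d.eval s = 0
        conv_lhs => rw [hsym]
        exact h4
      have hdvd : (X - C r) * (X - C s) ∣ d := by
        by_cases hrs : r = s
        · -- |r| = 1, double root via derivative argument
          obtain ⟨dq, hdq⟩ := dvd_iff_isRoot.mpr hr
          have habs : ‖r‖ = 1 := by
            have h1 : r * (starRingEnd ℂ) r = 1 := by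
              nth_rewrite 1 [hrs]
              exact hscr
            have h2 : Complex.normSq r = 1 := by
              have h3 := Complex.mul_conj r
              rw [h1] at h3
              exact_mod_cast h3.symm
            have h4 : ‖r‖ ^ 2 = 1 := by rw [Complex.sq_norm, h2]
            nlinarith [norm_nonneg r]
          set x₀ : ℝ := r.arg with hx₀def
          have hx₀ : Complex.exp (Complex.I * x₀) = r := by
            have h5 := Complex.norm_mul_exp_arg_mul_I r
            rw [habs] at h5
            rw [mul_comm]
            simpa using h5
          set a : ℂ := -(Complex.I * ((n+1:ℕ):ℂ)) with hadef
          set v : ℝ → ℂ := fun x => d.eval (Complex.exp (Complex.I * x)) * Complex.exp (a * x)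
            with hvdef
          have hva : ∀ x : ℝ, Complex.exp (a * x)
              * Complex.exp (Complex.I * ((n+1:ℕ):ℂ) * x) = 1 := by
            intro x
            rw [← Complex.exp_add, show a * x + Complex.I * ((n+1:ℕ):ℂ) * x = 0 by
              rw [hadef]; ring]
            exact Complex.exp_zero
          have hvt : ∀ x : ℝ, ∃ t : ℝ, 0 ≤ t ∧ v x = (t : ℂ) := by
            intro x
            obtain ⟨t, ht, hu⟩ := hpos x
            refine ⟨t, ht, ?_⟩
            show d.eval _ * Complex.exp (a * x) = _
            rw [hu]
            linear_combination (t:ℂ) * hva x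
          have hv0 : v x₀ = 0 := by
            show d.eval _ * _ = 0
            rw [hx₀, show d.eval r = 0 from hr, zero_mul]
          have hder : HasDerivAt v
              (d.derivative.eval (Complex.exp (Complex.I * x₀))
                  * (Complex.exp (Complex.I * x₀) * Complex.I) * Complex.exp (a * x₀)
               + d.eval (Complex.exp (Complex.I * x₀)) * (Complex.exp (a * x₀) * a)) x₀ :=
            (fr_hasDerivAt d Complex.I x₀).mul (fr_hasDerivAt_exp a x₀)
          have hmin : IsLocalMin (fun x => (v x).re) x₀ :=
            Filter.Eventually.of_forall (fun y => by
              obtain ⟨t, ht, h⟩ := hvt y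
              simp only
              rw [hv0, h]
              simpa using ht)
          have hdre : HasDerivAt (fun x => (v x).re)
              (d.derivative.eval (Complex.exp (Complex.I * x₀))
                  * (Complex.exp (Complex.I * x₀) * Complex.I) * Complex.exp (a * x₀)
               + d.eval (Complex.exp (Complex.I * x₀)) * (Complex.exp (a * x₀) * a)).re x₀ :=
            Complex.reCLM.hasFDerivAt.comp_hasDerivAt x₀ hder
          have hDre := hmin.hasDerivAt_eq_zero hdre
          have hdim : HasDerivAt (fun x => (v x).im)
              (d.derivative.eval (Complex.exp (Complex.I * x₀))
                  * (Complex.exp (Complex.I * x₀) * Complex.I) * Complex.exp (a * x₀)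
               + d.eval (Complex.exp (Complex.I * x₀)) * (Complex.exp (a * x₀) * a)).im x₀ :=
            Complex.imCLM.hasFDerivAt.comp_hasDerivAt x₀ hder
          have hdim0 : HasDerivAt (fun x => (v x).im) 0 x₀ := by
            have hfun : (fun x => (v x).im) = fun _ : ℝ => (0:ℝ) := by
              funext y
              obtain ⟨t, _, h⟩ := hvt y
              rw [h]
              simp
            rw [hfun]
            exact hasDerivAt_const x₀ 0
          have hDim := hdim.unique hdim0
          have hv' : d.derivative.eval (Complex.exp (Complex.I * x₀))
                  * (Complex.exp (Complex.I * x₀) * Complex.I) * Complex.exp (a * x₀)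
               + d.eval (Complex.exp (Complex.I * x₀)) * (Complex.exp (a * x₀) * a) = 0 :=
            Complex.ext hDre hDim
          rw [hx₀, show d.eval r = 0 from hr, zero_mul, add_zero] at hv'
          have hdr : d.derivative.eval r = 0 := by
            rcases mul_eq_zero.mp hv' with h | h
            · rcases mul_eq_zero.mp h with h2 | h2
              · exact h2
              · exact absurd h2 (mul_ne_zero hrne Complex.I_ne_zero)
            · exact absurd h (Complex.exp_ne_zero _)
          have hq : dq.eval r = 0 := by
            have hder2 : d.derivative.eval r = dq.eval r := by
              rw [hdq, derivative_mul]
              simp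
            rw [← hder2]
            exact hdr
          obtain ⟨d₃, hd₃⟩ := dvd_iff_isRoot.mpr hq
          refine ⟨d₃, ?_⟩
          rw [hdq, hd₃, ← hrs]
          ring
        · have hcop : IsCoprime (X - C r) (X - C s) :=
            isCoprime_X_sub_C_of_isUnit_sub ((sub_ne_zero.mpr hrs).isUnit)
          exact hcop.mul_dvd (dvd_iff_isRoot.mpr hr) (dvd_iff_isRoot.mpr hsroot)
      obtain ⟨d₂, hd₂⟩ := hdvd
      have hd₂0 : d₂ ≠ 0 := fun h => hd0 (by rw [hd₂, h, mul_zero])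
      have hXr : (X - C r) ≠ 0 := X_sub_C_ne_zero r
      have hXs : (X - C s) ≠ 0 := X_sub_C_ne_zero s
      have hns : 0 < Complex.normSq r := Complex.normSq_pos.mpr hrne
      have hdeg₂ : d₂.natDegree ≤ 2 * n := by
        have h1 : ((X - C r) * (X - C s)).natDegree = 2 := by
          rw [natDegree_mul hXr hXs, natDegree_X_sub_C, natDegree_X_sub_C]
        have h2 : d.natDegree = 2 + d₂.natDegree := by
          rw [hd₂, natDegree_mul (mul_ne_zero hXr hXs) hd₂0, h1]
        omega
      set d₄ : ℂ[X] := C (-r) * d₂ with hd₄def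
      have hdeg₄ : d₄.natDegree ≤ 2 * n := le_trans (natDegree_C_mul_le _ _) hdeg₂
      set S : ℝ → ℂ := fun x => d₄.eval (Complex.exp (Complex.I * x))
          * Complex.exp (-(Complex.I * (n:ℂ)) * x) with hSdef
      have hSb : ∀ x : ℝ, Complex.exp (-(Complex.I * (n:ℂ)) * x)
          * Complex.exp (Complex.I * (n:ℂ) * x) = 1 := by
        intro x
        rw [← Complex.exp_add,
          show -(Complex.I * (n:ℂ)) * x + Complex.I * (n:ℂ) * x = 0 by ring]
        exact Complex.exp_zero
      have hE4 : ∀ x : ℝ, d₄.eval (Complex.exp (Complex.I * x))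
          = -r * d₂.eval (Complex.exp (Complex.I * x)) := by
        intro x
        rw [hd₄def, eval_mul, eval_C]
      have hE2 : ∀ x : ℝ, d.eval (Complex.exp (Complex.I * x))
          = (Complex.exp (Complex.I * x) - r) * (Complex.exp (Complex.I * x) - s)
            * d₂.eval (Complex.exp (Complex.I * x)) := by
        intro x
        rw [hd₂]
        simp [eval_mul]
      have hX1 : ∀ x : ℝ, Complex.exp (Complex.I * ((n+1:ℕ):ℂ) * x)
          = Complex.exp (Complex.I * x) * Complex.exp (Complex.I * (n:ℂ) * x) := by
        intro x
        rw [hcast x, hsplit x]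
      have hSgood : ∀ x : ℝ, Complex.exp (Complex.I * x) ≠ r → (S x).im = 0 ∧ 0 ≤ (S x).re := by
        intro x hzr
        obtain ⟨t, ht, hu⟩ := hpos x
        set z := Complex.exp (Complex.I * x) with hzdef
        have hzne : z ≠ 0 := hzx x
        have hkey := fr_key2 r s z hrne hscr hzne (fr_conj_exp x)
        have hnsq : Complex.normSq (z - r) ≠ 0 :=
          fun h => hzr (sub_eq_zero.mp (Complex.normSq_eq_zero.mp h))
        have hM := (Complex.mul_conj r).symm
        have hU2 : (z - r) * (z - s) * d₂.eval z
            = (t:ℂ) * Complex.exp (Complex.I * ((n+1:ℕ):ℂ) * x) := by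
          rw [← hE2 x]
          exact hu
        have hbig : S x * (((Complex.normSq (z - r) : ℝ) : ℂ) * z)
            = ((Complex.normSq r : ℝ) : ℂ) * (t : ℂ) * z := by
          show d₄.eval z * Complex.exp (-(Complex.I * (n:ℂ)) * x)
              * (((Complex.normSq (z - r) : ℝ) : ℂ) * z) = _
          linear_combination
            (Complex.exp (-(Complex.I * (n:ℂ)) * x) * ((Complex.normSq (z - r) : ℝ) : ℂ) * z)
               * hE4 x
            + (-(r * d₂.eval z * Complex.exp (-(Complex.I * (n:ℂ)) * x))) * hkey
            + (r * (starRingEnd ℂ) r * Complex.exp (-(Complex.I * (n:ℂ)) * x)) * hU2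
            + (r * (starRingEnd ℂ) r * (t:ℂ) * Complex.exp (-(Complex.I * (n:ℂ)) * x)) * hX1 x
            + (r * (starRingEnd ℂ) r * (t:ℂ) * z) * hSb x
            + (-((t:ℂ) * z)) * hM
        have hAne : ((Complex.normSq (z - r) : ℝ) : ℂ) ≠ 0 := by
          exact_mod_cast hnsq
        have hmain : S x = ((Complex.normSq r * t / Complex.normSq (z - r) : ℝ) : ℂ) := by
          have hbig2 : S x * ((Complex.normSq (z - r) : ℝ) : ℂ) * z
              = ((Complex.normSq r : ℝ) : ℂ) * (t : ℂ) * z := by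
            rw [mul_assoc]
            exact hbig
          have h2 := mul_right_cancel₀ hzne hbig2
          rw [Complex.ofReal_div, Complex.ofReal_mul, eq_div_iff hAne]
          exact h2
        constructor
        · rw [hmain]; simp
        · rw [hmain]
          simp only [Complex.ofReal_re]
          exact div_nonneg (mul_nonneg (Complex.normSq_nonneg r) ht) (Complex.normSq_nonneg _)
      -- extend to all x by continuity
      have hexp : Continuous fun x : ℝ => Complex.exp (Complex.I * x) :=
        (continuous_const.mul Complex.continuous_ofReal).cexp
      have hScont : Continuous S := by
        apply Continuous.mul
        · exact d₄.continuous.comp hexp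
        · exact (continuous_const.mul Complex.continuous_ofReal).cexp
      have hSall : ∀ x : ℝ, (S x).im = 0 ∧ 0 ≤ (S x).re := by
        intro x
        by_cases hzr : Complex.exp (Complex.I * x) = r
        · -- limit of good points
          set y : ℕ → ℝ := fun m => x + 1/((m:ℝ)+2) with hydef
          have hym : ∀ m : ℕ, Complex.exp (Complex.I * (y m)) ≠ r := by
            intro m h
            have h1 : Complex.exp (Complex.I * (y m))
                = Complex.exp (Complex.I * x) * Complex.exp (Complex.I * (1/((m:ℝ)+2) : ℝ)) := by
              rw [← Complex.exp_add]
              congr 1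
              rw [hydef]
              push_cast
              ring
            rw [h1, hzr] at h
            have h2 : Complex.exp (Complex.I * (1/((m:ℝ)+2) : ℝ)) = 1 :=
              mul_left_cancel₀ hrne (by rw [h, mul_one])
            have hm0 : (0:ℝ) < 1/((m:ℝ)+2) := by positivity
            have hm1 : (1/((m:ℝ)+2) : ℝ) < 1 := by
              rw [div_lt_one (by positivity)]
              linarith [Nat.cast_nonneg (α := ℝ) m]
            exact fr_exp_ne_one _ hm0 hm1 h2
          have htend : Filter.Tendsto y Filter.atTop (nhds x) := by
            have hA : Filter.Tendsto (fun m : ℕ => (m:ℝ)+2) Filter.atTop Filter.atTop :=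
              Filter.tendsto_atTop_add_const_right _ 2 tendsto_natCast_atTop_atTop
            have h1 : Filter.Tendsto (fun m : ℕ => 1/((m:ℝ)+2)) Filter.atTop (nhds 0) := by
              simpa [one_div, Pi.inv_def] using hA.inv_tendsto_atTop
            have h4 := Filter.Tendsto.add (tendsto_const_nhds (x := x) (f := Filter.atTop)) h1
            have h5 : Filter.Tendsto (fun m : ℕ => x + 1/((m:ℝ)+2)) Filter.atTop (nhds x) := by
              simpa using h4
            exact h5
          have htendS : Filter.Tendsto (fun m => S (y m)) Filter.atTop (nhds (S x)) :=
            (hScont.tendsto x).comp htend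
          have hclosed : IsClosed {w : ℂ | w.im = 0 ∧ 0 ≤ w.re} := by
            rw [Set.setOf_and]
            exact IsClosed.inter (isClosed_eq Complex.continuous_im continuous_const)
              (isClosed_le continuous_const Complex.continuous_re)
          exact hclosed.mem_of_tendsto htendS
            (Filter.Eventually.of_forall (fun m => hSgood (y m) (hym m)))
        · exact hSgood x hzr
      have hpos₄ : ∀ x : ℝ, ∃ t : ℝ, 0 ≤ t ∧
          d₄.eval (Complex.exp (Complex.I * x)) = (t:ℂ) * Complex.exp (Complex.I * n * x) := by
        intro x
        obtain ⟨him, hre⟩ := hSall x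
        refine ⟨(S x).re, hre, ?_⟩
        have hSx : S x = (((S x).re : ℝ) : ℂ) := by
          apply Complex.ext
          · simp
          · simp [him]
        have h1 : S x * Complex.exp (Complex.I * (n:ℂ) * x)
            = d₄.eval (Complex.exp (Complex.I * x)) := by
          show d₄.eval _ * _ * _ = _
          rw [mul_assoc, hSb x, mul_one]
        rw [← h1]
        conv_lhs => rw [hSx]
      obtain ⟨e, hedeg, heq⟩ := IH d₄ hdeg₄ hpos₄
      refine ⟨C (((Real.sqrt (Complex.normSq r))⁻¹ : ℝ) : ℂ) * ((X - C r) * e), ?_, fun x => ?_⟩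
      · have h1 : ((X - C r) * e).natDegree ≤ 1 + n := by
          refine le_trans (natDegree_mul_le) ?_
          rw [natDegree_X_sub_C]
          omega
        refine le_trans (natDegree_mul_le) ?_
        rw [natDegree_C]
        omega
      · set z := Complex.exp (Complex.I * x) with hzdef
        have hzne : z ≠ 0 := hzx x
        have hkey := fr_key2 r s z hrne hscr hzne (fr_conj_exp x)
        have hM := (Complex.mul_conj r).symm
        set E : ℝ := ‖e.eval z‖ with hEdef
        -- core identity
        have HH : d.eval z * ((Complex.normSq r : ℝ) : ℂ)
            = ((Complex.normSq (z - r) : ℝ) : ℂ) * ((E:ℂ))^2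
                * Complex.exp (Complex.I * ((n+1:ℕ):ℂ) * x) := by
          linear_combination ((Complex.normSq r : ℝ) : ℂ) * hE2 x
            + ((z - r) * (z - s) * d₂.eval z) * hM
            + (r * d₂.eval z) * hkey
            + (-(z * ((Complex.normSq (z - r) : ℝ) : ℂ))) * hE4 x
            + (z * ((Complex.normSq (z - r) : ℝ) : ℂ)) * heq x
            + (-(((Complex.normSq (z - r) : ℝ) : ℂ) * ((E:ℂ))^2)) * hX1 x
        -- norm computation
        have hnr : ‖(C (((Real.sqrt (Complex.normSq r))⁻¹ : ℝ) : ℂ) * ((X - C r) * e)).eval z‖^2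
              * Complex.normSq r
            = Complex.normSq (z - r) * E^2 := by
          rw [eval_mul, eval_mul, eval_C, eval_sub, eval_X, eval_C]
          rw [norm_mul, norm_mul]
          rw [Complex.norm_real, Real.norm_eq_abs,
            _root_.abs_of_nonneg (by positivity : (0:ℝ) ≤ (Real.sqrt (Complex.normSq r))⁻¹)]
          rw [mul_pow, mul_pow, inv_pow, Real.sq_sqrt hns.le]
          rw [show ‖z - r‖^2 = Complex.normSq (z - r) by
            rw [Complex.sq_norm]]
          rw [← hEdef]
          field_simp
        have hBne : ((Complex.normSq r : ℝ) : ℂ) ≠ 0 := by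
          exact_mod_cast hns.ne'
        apply mul_right_cancel₀ hBne
        rw [HH]
        have hnrC : (((‖(C (((Real.sqrt (Complex.normSq r))⁻¹ : ℝ) : ℂ)
              * ((X - C r) * e)).eval z‖ : ℝ) : ℂ))^2 * ((Complex.normSq r : ℝ) : ℂ)
            = ((Complex.normSq (z - r) : ℝ) : ℂ) * ((E:ℂ))^2 := by
          exact_mod_cast congrArg (fun u : ℝ => (u : ℂ)) hnr
        linear_combination (-(Complex.exp (Complex.I * ((n+1:ℕ):ℂ) * x))) * hnrC


/-- Existence of Laurent complementary. A Laurent polynomial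
`P(x) = Σ_{j=-L}^{L} p_j e^{ijx/2}` with parity `L mod 2` satisfies `|P(x)| ≤ 1` for all real `x`
iff there is a Laurent polynomial `Q` of degree at most `L` with parity `L mod 2` such that
`|P(x)|² + |Q(x)|² = 1` for all real `x`. -/
theorem stmt_1 (L : ℕ) (p : ℤ → ℂ)
    (hparity : ∀ j : ℤ, j % 2 ≠ (L : ℤ) % 2 → p j = 0)
    (P : ℝ → ℂ)
    (hP : ∀ x : ℝ, P x =
      ∑ j ∈ Finset.Icc (-(L : ℤ)) (L : ℤ), p j * Complex.exp (Complex.I * j * x / 2)) :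
    (∀ x : ℝ, ‖P x‖ ≤ 1) ↔
      ∃ q : ℤ → ℂ,
        (∀ j : ℤ, j % 2 ≠ (L : ℤ) % 2 → q j = 0) ∧
        (∀ x : ℝ, ‖P x‖ ^ 2 +
          ‖∑ j ∈ Finset.Icc (-(L : ℤ)) (L : ℤ), q j * Complex.exp (Complex.I * j * x / 2)‖ ^ 2
            = 1) := by
  constructor
  · intro h
    -- build d
    set d : ℂ[X] := X^L - ∑ j ∈ Finset.Icc (-(L:ℤ)) (L:ℤ), ∑ j' ∈ Finset.Icc (-(L:ℤ)) (L:ℤ),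
        C (p j * (starRingEnd ℂ) (p j')) * X ^ ((2*(L:ℤ) + j - j')/2).toNat with hddef
    have hdeg : d.natDegree ≤ 2 * L := by
      refine le_trans (natDegree_sub_le _ _) ?_
      rw [max_le_iff]
      constructor
      · rw [natDegree_X_pow]; omega
      · refine natDegree_sum_le_of_forall_le _ _ ?_
        intro j hj
        refine natDegree_sum_le_of_forall_le _ _ ?_
        intro j' hj'
        refine le_trans (natDegree_C_mul_le _ _) ?_
        rw [natDegree_X_pow]
        obtain ⟨h1, h2⟩ := Finset.mem_Icc.mp hj
        obtain ⟨h3, h4⟩ := Finset.mem_Icc.mp hj'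
        omega
    -- per term evaluation
    have hterm : ∀ x : ℝ, ∀ j ∈ Finset.Icc (-(L:ℤ)) (L:ℤ), ∀ j' ∈ Finset.Icc (-(L:ℤ)) (L:ℤ),
        (p j * (starRingEnd ℂ) (p j'))
            * (Complex.exp (Complex.I * x)) ^ ((2*(L:ℤ) + j - j')/2).toNat
        = (p j * Complex.exp (Complex.I * j * x / 2))
            * ((starRingEnd ℂ) (p j') * Complex.exp (-(Complex.I * j' * x / 2)))
            * Complex.exp (Complex.I * (L:ℂ) * x) := by
      intro x j hj j' hj'
      by_cases hpj : p j = 0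
      · simp [hpj]
      by_cases hpj' : p j' = 0
      · simp [hpj']
      have hj2 : j % 2 = (L:ℤ) % 2 := by
        by_contra hcon
        exact hpj (hparity j hcon)
      have hj'2 : j' % 2 = (L:ℤ) % 2 := by
        by_contra hcon
        exact hpj' (hparity j' hcon)
      obtain ⟨hjl, hju⟩ := Finset.mem_Icc.mp hj
      obtain ⟨hj'l, hj'u⟩ := Finset.mem_Icc.mp hj'
      set k : ℕ := ((2*(L:ℤ) + j - j')/2).toNat with hk
      have h2k : (k : ℤ) * 2 = 2*(L:ℤ) + j - j' := by omega
      have hzk : (Complex.exp (Complex.I * x)) ^ k = Complex.exp (Complex.I * (k:ℂ) * x) := by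
        rw [← Complex.exp_nat_mul]
        congr 1
        ring
      have hkc : ((k:ℕ) : ℂ) * 2 = 2*((L:ℕ):ℂ) + (j:ℂ) - ((j':ℤ):ℂ) := by
        exact_mod_cast congrArg (fun m : ℤ => (m : ℂ)) h2k
      have hcomb : Complex.exp (Complex.I * (j:ℂ) * x / 2)
          * Complex.exp (-(Complex.I * (j':ℂ) * x / 2)) * Complex.exp (Complex.I * (L:ℂ) * x)
          = Complex.exp (Complex.I * (k:ℂ) * x) := by
        rw [← Complex.exp_add, ← Complex.exp_add]
        congr 1
        linear_combination (-(Complex.I * (x:ℂ)) / 2) * hkc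
      rw [hzk, ← hcomb]
      ring
    -- conjugate of P
    have hconjP : ∀ x : ℝ, (starRingEnd ℂ) (P x)
        = ∑ j' ∈ Finset.Icc (-(L:ℤ)) (L:ℤ),
            (starRingEnd ℂ) (p j') * Complex.exp (-(Complex.I * j' * x / 2)) := by
      intro x
      rw [hP x, map_sum]
      apply Finset.sum_congr rfl
      intro j' _
      rw [map_mul]
      congr 1
      rw [← Complex.exp_conj]
      congr 1
      simp [map_mul, Complex.conj_I, map_div₀, map_ofNat]
      ring
    -- evaluation of d
    have hdeval : ∀ x : ℝ, d.eval (Complex.exp (Complex.I * x))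
        = Complex.exp (Complex.I * (L:ℂ) * x) * (1 - P x * (starRingEnd ℂ) (P x)) := by
      intro x
      rw [hddef]
      simp only [eval_sub, eval_pow, eval_X, eval_finset_sum, eval_mul, eval_C]
      rw [hconjP x, hP x, Finset.sum_mul_sum]
      rw [mul_sub, mul_one]
      congr 1
      · rw [← Complex.exp_nat_mul]
        congr 1
        ring
      · rw [Finset.mul_sum]
        apply Finset.sum_congr rfl
        intro j hj
        rw [Finset.mul_sum]
        apply Finset.sum_congr rfl
        intro j' hj'
        rw [hterm x j hj j' hj']
        ring
    -- P x * conj (P x) is the squared norm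
    have hPc : ∀ x : ℝ, P x * (starRingEnd ℂ) (P x) = ((‖P x‖^2 : ℝ) : ℂ) := by
      intro x
      rw [Complex.mul_conj]
      norm_cast
      rw [Complex.normSq_eq_norm_sq]
    have hpos : ∀ x : ℝ, ∃ t : ℝ, 0 ≤ t ∧
        d.eval (Complex.exp (Complex.I * x)) = (t:ℂ) * Complex.exp (Complex.I * (L:ℕ) * x) := by
      intro x
      refine ⟨1 - ‖P x‖^2, ?_, ?_⟩
      · nlinarith [h x, norm_nonneg (P x)]
      · rw [hdeval x, hPc x]
        push_cast
        ring
    obtain ⟨e, hedeg, heq⟩ := fr_main L d hdeg hpos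
    have hreal : ∀ x : ℝ, 1 - ‖P x‖^2 = ‖e.eval (Complex.exp (Complex.I * x))‖^2 := by
      intro x
      have h1 := heq x
      rw [hdeval x, hPc x] at h1
      have h3 : (1:ℂ) - ((‖P x‖^2 : ℝ) : ℂ)
          = ((‖e.eval (Complex.exp (Complex.I * x))‖^2 : ℝ) : ℂ) := by
        apply mul_left_cancel₀ (Complex.exp_ne_zero (Complex.I * (L:ℂ) * x))
        rw [h1]
        push_cast
        ring
      have h3' : ((1 - ‖P x‖^2 : ℝ) : ℂ)
          = ((‖e.eval (Complex.exp (Complex.I * x))‖^2 : ℝ) : ℂ) := by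
        push_cast at h3 ⊢
        linear_combination h3
      exact_mod_cast h3' 
    refine ⟨fun j => if j % 2 = (L:ℤ) % 2 then e.coeff ((j + L)/2).toNat else 0,
      fun j hj => if_neg hj, fun x => ?_⟩
    have hQ : ∑ j ∈ Finset.Icc (-(L:ℤ)) (L:ℤ),
        (if j % 2 = (L:ℤ) % 2 then e.coeff ((j + L)/2).toNat else 0)
          * Complex.exp (Complex.I * j * x / 2)
        = Complex.exp (-(Complex.I * (L:ℂ) * x) / 2)
            * e.eval (Complex.exp (Complex.I * x)) := by
      rw [Polynomial.eval_eq_sum_range' (lt_of_le_of_lt hedeg (Nat.lt_succ_self L)),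
        Finset.mul_sum]
      rw [show (∑ j ∈ Finset.Icc (-(L:ℤ)) (L:ℤ),
          (if j % 2 = (L:ℤ) % 2 then e.coeff ((j + L)/2).toNat else 0)
            * Complex.exp (Complex.I * j * x / 2))
        = ∑ j ∈ (Finset.Icc (-(L:ℤ)) (L:ℤ)).filter (fun j => j % 2 = (L:ℤ) % 2),
            e.coeff ((j + L)/2).toNat * Complex.exp (Complex.I * j * x / 2) by
          rw [Finset.sum_filter]
          apply Finset.sum_congr rfl
          intro j _
          split
          · rfl
          · rw [zero_mul]]
      apply Finset.sum_nbij' (i := fun j => ((j + (L:ℤ))/2).toNat)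
        (j := fun m => 2*(m:ℤ) - (L:ℤ))
      · intro j hj
        obtain ⟨hj1, hj2⟩ := Finset.mem_filter.mp hj
        obtain ⟨hl, hu⟩ := Finset.mem_Icc.mp hj1
        rw [Finset.mem_range]
        omega
      · intro m hm
        rw [Finset.mem_range] at hm
        rw [Finset.mem_filter, Finset.mem_Icc]
        omega
      · intro j hj
        obtain ⟨hj1, hj2⟩ := Finset.mem_filter.mp hj
        obtain ⟨hl, hu⟩ := Finset.mem_Icc.mp hj1
        omega
      · intro m hm
        rw [Finset.mem_range] at hm
        omega
      · intro j hj
        obtain ⟨hj1, hj2⟩ := Finset.mem_filter.mp hj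
        obtain ⟨hl, hu⟩ := Finset.mem_Icc.mp hj1
        set m : ℕ := ((j + (L:ℤ))/2).toNat with hm
        have h2m : (m : ℤ) * 2 = j + L := by omega
        have hmc : ((m:ℕ) : ℂ) * 2 = (j:ℂ) + ((L:ℕ):ℂ) := by
          exact_mod_cast congrArg (fun u : ℤ => (u : ℂ)) h2m
        have hzm : Complex.exp (Complex.I * x) ^ m = Complex.exp (Complex.I * (m:ℂ) * x) := by
          rw [← Complex.exp_nat_mul]
          congr 1
          ring
        rw [hzm]
        have hcomb2 : Complex.exp (-(Complex.I * (L:ℂ) * x) / 2)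
            * Complex.exp (Complex.I * (m:ℂ) * x)
            = Complex.exp (Complex.I * (j:ℂ) * x / 2) := by
          rw [← Complex.exp_add]
          congr 1
          linear_combination (Complex.I * (x:ℂ) / 2) * hmc
        rw [← hcomb2]
        ring
    rw [hQ, norm_mul]
    have habs1 : ‖Complex.exp (-(Complex.I * (L:ℂ) * x) / 2)‖ = 1 := by
      rw [Complex.norm_exp]
      norm_num
    rw [habs1, one_mul]
    linarith [hreal x]
  · rintro ⟨q, _, hq⟩
    intro x
    have h1 := hq x
    nlinarith [norm_nonneg (P x), norm_nonneg (∑ j ∈ Finset.Icc (-(L : ℤ)) (L : ℤ),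
      q j * Complex.exp (Complex.I * j * x / 2))]
end

section
/- Let L ∈ ℕ and let P, Q : ℝ → ℂ be Laurent polynomials in ℂ[e^{ix/2}, e^{−ix/2}]. There exist ω ∈ ℝ and θ = (θ_0,…,θ_L), φ = (φ_0,…,φ_L) ∈ ℝ^{L+1} such that for all x ∈ ℝ the trigonometric QSP unitary satisfies W^L_{ω,θ,φ}(x) = [[P(x), −Q(x)], [Q*(x), P*(x)]] if and only if the following three conditions hold: (1) deg(P) ≤ L and deg(Q) ≤ L; (2) P and Q have parity L mod 2; (3) |P(x)|² + |Q(x)|² = 1 for all x ∈ ℝ. -/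
open scoped Matrix

/-- `R_z(φ) = diag(e^{-iφ/2}, e^{iφ/2})`. -/
noncomputable def Rz (φ : ℝ) : Matrix (Fin 2) (Fin 2) ℂ :=
  !![Complex.exp (-(Complex.I * φ / 2)), 0; 0, Complex.exp (Complex.I * φ / 2)]

/-- `R_y(θ)`, the real rotation by angle `θ/2`, viewed as a complex matrix. -/
noncomputable def Ry (θ : ℝ) : Matrix (Fin 2) (Fin 2) ℂ :=
  !![(Real.cos (θ / 2) : ℂ), -(Real.sin (θ / 2) : ℂ);
     (Real.sin (θ / 2) : ℂ), (Real.cos (θ / 2) : ℂ)]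

/-- The trigonometric QSP unitary
`W^L_{ω,θ,φ}(x) = R_z(ω) R_y(θ_0) R_z(φ_0) ∏_{l=1}^{L} [R_z(x) R_y(θ_l) R_z(φ_l)]`,
multiplied left to right in increasing `l`. -/
noncomputable def Wqsp (L : ℕ) (ω : ℝ) (θ φ : ℕ → ℝ) (x : ℝ) :
    Matrix (Fin 2) (Fin 2) ℂ :=
  Rz ω * Ry (θ 0) * Rz (φ 0) *
    ((List.range L).map (fun l => Rz x * Ry (θ (l + 1)) * Rz (φ (l + 1)))).prod

/-- The value at `x ∈ ℝ` of the Laurent polynomial in `ℂ[e^{ix/2}, e^{-ix/2}]` with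
(finitely supported) coefficients `p : ℤ → ℂ`. -/
noncomputable def lval (p : ℤ → ℂ) (x : ℝ) : ℂ :=
  ∑ᶠ j : ℤ, p j * Complex.exp (Complex.I * j * x / 2)


section QSPAux
open Complex

noncomputable def ee (j : ℤ) (x : ℝ) : ℂ := Complex.exp (Complex.I * j * x / 2)

lemma lval_def' (p : ℤ → ℂ) (x : ℝ) : lval p x = ∑ᶠ j : ℤ, p j * ee j x := rfl

lemma ee_zero (x : ℝ) : ee 0 x = 1 := by simp [ee]

lemma ee_add (j k : ℤ) (x : ℝ) : ee (j + k) x = ee j x * ee k x := by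
  rw [ee, ee, ee, ← Complex.exp_add]
  push_cast
  ring_nf

lemma ee_conj (j : ℤ) (x : ℝ) : (starRingEnd ℂ) (ee j x) = ee (-j) x := by
  rw [ee, ee, ← Complex.exp_conj]
  push_cast
  rw [map_div₀]
  simp only [map_mul, Complex.conj_I, Complex.conj_ofReal, map_intCast, map_ofNat]
  ring_nf

lemma ee_continuous (j : ℤ) : Continuous (ee j) := by
  unfold ee; fun_prop

lemma ee_ne_zero (j : ℤ) (x : ℝ) : ee j x ≠ 0 := Complex.exp_ne_zero _

lemma lval_eq_sum (p : ℤ → ℂ) {s : Finset ℤ} (h : ∀ j, p j ≠ 0 → j ∈ s) (x : ℝ) :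
    lval p x = ∑ j ∈ s, p j * ee j x := by
  rw [lval_def']
  apply finsum_eq_finset_sum_of_support_subset
  intro j hj
  simp only [Function.mem_support] at hj
  exact h j (fun h0 => hj (by simp [h0]))
lemma ee_as_exp (j : ℤ) (x : ℝ) : ee j x = Complex.exp ((Complex.I * j / 2) * x) := by
  rw [ee]; ring_nf

lemma integral_ee (j : ℤ) :
    (∫ x in (0:ℝ)..(4 * Real.pi), ee j x) = if j = 0 then (4 * Real.pi : ℂ) else 0 := by
  by_cases h : j = 0
  · subst h
    simp only [ee_zero, if_true]
    rw [intervalIntegral.integral_const]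
    simp [Complex.real_smul]
  · rw [if_neg h]
    have hc : (Complex.I * j / 2 : ℂ) ≠ 0 := by
      simp [Complex.I_ne_zero, h]
    have := integral_exp_mul_complex (a := 0) (b := 4 * Real.pi) hc
    simp only [← ee_as_exp] at this
    rw [this, ee_as_exp, ee_as_exp]
    have h1 : (Complex.I * j / 2) * ((4 * Real.pi : ℝ) : ℂ) = j * (2 * Real.pi * Complex.I) := by
      push_cast; ring
    rw [h1, Complex.exp_int_mul_two_pi_mul_I]
    simp

lemma lval_continuous (p : ℤ → ℂ) (hp : (Function.support p).Finite) :
    Continuous (lval p) := by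
  have : lval p = fun x => ∑ j ∈ hp.toFinset, p j * ee j x := by
    funext x
    exact lval_eq_sum p (fun j hj => hp.mem_toFinset.mpr hj) x
  rw [this]
  exact continuous_finset_sum _ (fun j _ => continuous_const.mul (ee_continuous j))

lemma integral_lval (p : ℤ → ℂ) {s : Finset ℤ} (hs : ∀ j, p j ≠ 0 → j ∈ s)
    (k : ℤ) (hk : k ∈ s) :
    (∫ x in (0:ℝ)..(4 * Real.pi), lval p x * ee (-k) x) = 4 * Real.pi * p k := by
  have hpt : ∀ x : ℝ, lval p x * ee (-k) x = ∑ j ∈ s, p j * ee (j - k) x := by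
    intro x
    rw [lval_eq_sum p hs x, Finset.sum_mul]
    refine Finset.sum_congr rfl (fun j _ => ?_)
    rw [show j - k = j + -k by ring, ee_add]
    ring
  simp only [hpt]
  rw [intervalIntegral.integral_finset_sum (f := fun j x => p j * ee (j - k) x) (fun j _ =>
    ((continuous_const.mul (ee_continuous (j - k))).intervalIntegrable 0 (4 * Real.pi)))]
  have : ∀ j ∈ s, (∫ x in (0:ℝ)..(4 * Real.pi), p j * ee (j - k) x)
      = if j = k then 4 * Real.pi * p k else 0 := by
    intro j _
    rw [intervalIntegral.integral_const_mul, integral_ee]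
    by_cases hjk : j = k
    · subst hjk; simp [sub_self]; ring
    · rw [if_neg (by omega), if_neg hjk, mul_zero]
  rw [Finset.sum_congr rfl this, Finset.sum_ite_eq' s k (fun _ => 4 * Real.pi * p k), if_pos hk]

lemma lval_coeff_zero (p : ℤ → ℂ) (hp : (Function.support p).Finite)
    (h : ∀ x : ℝ, lval p x = 0) : ∀ k, p k = 0 := by
  intro k
  have hs : ∀ j, p j ≠ 0 → j ∈ insert k hp.toFinset := by
    intro j hj; exact Finset.mem_insert_of_mem (hp.mem_toFinset.mpr hj)
  have := integral_lval p hs k (Finset.mem_insert_self k _)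
  simp only [h, zero_mul, intervalIntegral.integral_zero] at this
  have hpi : (4 * Real.pi : ℂ) ≠ 0 := by
    simp [Complex.ofReal_ne_zero, Real.pi_ne_zero]
  have h2 : (4 * Real.pi : ℂ) * p k = 0 := this.symm
  rcases mul_eq_zero.mp h2 with h1 | h1
  · exact absurd h1 (by simp [Real.pi_ne_zero])
  · exact h1
lemma shift_support_finite (p : ℤ → ℂ) (hp : (Function.support p).Finite) (k : ℤ) :
    (Function.support fun j => p (j - k)).Finite :=
  (hp.image (fun i => i + k)).subset (by
    intro j hj
    exact ⟨j - k, hj, by ring⟩)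

lemma smul_support_finite (p : ℤ → ℂ) (hp : (Function.support p).Finite) (c : ℂ) :
    (Function.support fun j => c * p j).Finite :=
  hp.subset (by intro j hj; simp only [Function.mem_support] at *; exact fun h0 => hj (by simp [h0]))

lemma add_support_finite (p q : ℤ → ℂ) (hp : (Function.support p).Finite)
    (hq : (Function.support q).Finite) : (Function.support fun j => p j + q j).Finite :=
  (hp.union hq).subset (Function.support_add _ _)

lemma lval_shift (p : ℤ → ℂ) (hp : (Function.support p).Finite) (k : ℤ) (x : ℝ) :
    lval (fun j => p (j - k)) x = ee k x * lval p x := by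
  have hsub : ∀ j, p (j - k) ≠ 0 → j ∈ hp.toFinset.map (addRightEmbedding k) := by
    intro j hj
    rw [Finset.mem_map]
    exact ⟨j - k, hp.mem_toFinset.mpr hj, by simp [addRightEmbedding]⟩
  rw [lval_eq_sum _ hsub x, Finset.sum_map,
    lval_eq_sum p (fun j hj => hp.mem_toFinset.mpr hj) x, Finset.mul_sum]
  refine Finset.sum_congr rfl fun i _ => ?_
  simp only [addRightEmbedding_apply, add_sub_cancel_right]
  rw [ee_add]; ring

lemma lval_smul (c : ℂ) (p : ℤ → ℂ) (hp : (Function.support p).Finite) (x : ℝ) :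
    lval (fun j => c * p j) x = c * lval p x := by
  have hsub : ∀ j, c * p j ≠ 0 → j ∈ hp.toFinset := by
    intro j hj
    exact hp.mem_toFinset.mpr (fun h0 => hj (by simp [h0]))
  rw [lval_eq_sum _ hsub x, lval_eq_sum p (fun j hj => hp.mem_toFinset.mpr hj) x, Finset.mul_sum]
  exact Finset.sum_congr rfl fun i _ => by ring

lemma lval_add (p q : ℤ → ℂ) (hp : (Function.support p).Finite)
    (hq : (Function.support q).Finite) (x : ℝ) :
    lval (fun j => p j + q j) x = lval p x + lval q x := by
  have h1 : ∀ j, p j ≠ 0 → j ∈ hp.toFinset ∪ hq.toFinset := by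
    intro j hj; exact Finset.mem_union_left _ (hp.mem_toFinset.mpr hj)
  have h2 : ∀ j, q j ≠ 0 → j ∈ hp.toFinset ∪ hq.toFinset := by
    intro j hj; exact Finset.mem_union_right _ (hq.mem_toFinset.mpr hj)
  have h3 : ∀ j, p j + q j ≠ 0 → j ∈ hp.toFinset ∪ hq.toFinset := by
    intro j hj
    by_cases h : p j = 0
    · exact h2 j (fun h0 => hj (by simp [h, h0]))
    · exact h1 j h
  rw [lval_eq_sum _ h3 x, lval_eq_sum p h1 x, lval_eq_sum q h2 x, ← Finset.sum_add_distrib]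
  exact Finset.sum_congr rfl fun i _ => by ring

/-- master combination lemma -/
lemma lval_comb (c₁ c₂ : ℂ) (k₁ k₂ : ℤ) (p q : ℤ → ℂ)
    (hp : (Function.support p).Finite) (hq : (Function.support q).Finite) (x : ℝ) :
    lval (fun j => c₁ * p (j - k₁) + c₂ * q (j - k₂)) x
      = c₁ * (ee k₁ x * lval p x) + c₂ * (ee k₂ x * lval q x) := by
  rw [lval_add _ _ (smul_support_finite _ (shift_support_finite p hp k₁) c₁)
      (smul_support_finite _ (shift_support_finite q hq k₂) c₂) x,
    lval_smul c₁ _ (shift_support_finite p hp k₁) x,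
    lval_smul c₂ _ (shift_support_finite q hq k₂) x,
    lval_shift p hp k₁ x, lval_shift q hq k₂ x]

lemma comb_support_finite (c₁ c₂ : ℂ) (k₁ k₂ : ℤ) (p q : ℤ → ℂ)
    (hp : (Function.support p).Finite) (hq : (Function.support q).Finite) :
    (Function.support fun j => c₁ * p (j - k₁) + c₂ * q (j - k₂)).Finite :=
  add_support_finite _ _ (smul_support_finite _ (shift_support_finite p hp k₁) c₁)
    (smul_support_finite _ (shift_support_finite q hq k₂) c₂)
lemma prod_int (p : ℤ → ℂ) (M : ℤ) (hM : 1 ≤ M) (hdeg : ∀ j, M < |j| → p j = 0) :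
    (∫ x in (0:ℝ)..(4 * Real.pi),
        (lval p x * (starRingEnd ℂ) (lval p x)) * ee (-(2 * M)) x)
      = 4 * Real.pi * (p M * (starRingEnd ℂ) (p (-M))) := by
  set s : Finset ℤ := Finset.Icc (-M) M with hs_def
  have hs : ∀ j, p j ≠ 0 → j ∈ s := by
    intro j hj
    rw [hs_def, Finset.mem_Icc]
    by_contra hc
    exact hj (hdeg j (by rcases abs_cases j with ⟨h1,h2⟩|⟨h1,h2⟩ <;> omega))
  have hpt : ∀ x : ℝ, (lval p x * (starRingEnd ℂ) (lval p x)) * ee (-(2 * M)) x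
      = ∑ jk ∈ s ×ˢ s, (p jk.1 * (starRingEnd ℂ) (p jk.2)) * ee (jk.1 - jk.2 - 2 * M) x := by
    intro x
    rw [Finset.sum_product, lval_eq_sum p hs x, map_sum, Finset.sum_mul_sum, Finset.sum_mul]
    refine Finset.sum_congr rfl fun j _ => ?_
    rw [Finset.sum_mul]
    refine Finset.sum_congr rfl fun k _ => ?_
    rw [map_mul, ee_conj, show j - k - 2 * M = j + -k + -(2 * M) by ring, ee_add, ee_add]
    ring
  simp only [hpt]
  rw [intervalIntegral.integral_finset_sum
    (f := fun (jk : ℤ × ℤ) (x : ℝ) => (p jk.1 * (starRingEnd ℂ) (p jk.2)) * ee (jk.1 - jk.2 - 2 * M) x) (fun jk _ =>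
    ((continuous_const.mul (ee_continuous _)).intervalIntegrable 0 (4 * Real.pi)))]
  have hterm : ∀ jk ∈ s ×ˢ s,
      (∫ x in (0:ℝ)..(4 * Real.pi), (p jk.1 * (starRingEnd ℂ) (p jk.2)) * ee (jk.1 - jk.2 - 2 * M) x)
      = (p jk.1 * (starRingEnd ℂ) (p jk.2)) * (if jk.1 - jk.2 - 2 * M = 0 then (4 * Real.pi : ℂ) else 0) := by
    intro jk _
    rw [intervalIntegral.integral_const_mul, integral_ee]
  rw [Finset.sum_congr rfl hterm]
  rw [Finset.sum_eq_single_of_mem (M, -M)]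
  · rw [if_pos (by ring)]; ring
  · rw [hs_def, Finset.mem_product, Finset.mem_Icc, Finset.mem_Icc]; omega
  · rintro ⟨j, k⟩ hmem hne
    rw [hs_def, Finset.mem_product, Finset.mem_Icc, Finset.mem_Icc] at hmem
    rw [if_neg, mul_zero]
    intro h0
    apply hne
    have h1 : j = M := by omega
    have h2 : k = -M := by omega
    simp [h1, h2]

lemma ortho (p q : ℤ → ℂ) (hp : (Function.support p).Finite) (hq : (Function.support q).Finite)
    (M : ℤ) (hM : 1 ≤ M)
    (hdp : ∀ j, M < |j| → p j = 0) (hdq : ∀ j, M < |j| → q j = 0)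
    (hnorm : ∀ x : ℝ, ‖lval p x‖ ^ 2 + ‖lval q x‖ ^ 2 = 1) :
    p M * (starRingEnd ℂ) (p (-M)) + q M * (starRingEnd ℂ) (q (-M)) = 0 := by
  have key : ∀ x : ℝ, lval p x * (starRingEnd ℂ) (lval p x)
      + lval q x * (starRingEnd ℂ) (lval q x) = 1 := by
    intro x
    rw [Complex.mul_conj, Complex.mul_conj, Complex.normSq_eq_norm_sq, Complex.normSq_eq_norm_sq,
      ← Complex.ofReal_add, Complex.ofReal_eq_one]
    exact hnorm x
  have hcp : Continuous fun x => (starRingEnd ℂ) (lval p x) := by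
    simp only [starRingEnd_apply]
    exact continuous_star.comp (lval_continuous p hp)
  have hcq : Continuous fun x => (starRingEnd ℂ) (lval q x) := by
    simp only [starRingEnd_apply]
    exact continuous_star.comp (lval_continuous q hq)
  have i1 : IntervalIntegrable (fun x => (lval p x * (starRingEnd ℂ) (lval p x)) * ee (-(2*M)) x)
      MeasureTheory.volume 0 (4 * Real.pi) :=
    (((lval_continuous p hp).mul hcp).mul (ee_continuous _)).intervalIntegrable _ _
  have i2 : IntervalIntegrable (fun x => (lval q x * (starRingEnd ℂ) (lval q x)) * ee (-(2*M)) x)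
      MeasureTheory.volume 0 (4 * Real.pi) :=
    (((lval_continuous q hq).mul hcq).mul (ee_continuous _)).intervalIntegrable _ _
  have hI : (∫ x in (0:ℝ)..(4 * Real.pi),
      ((lval p x * (starRingEnd ℂ) (lval p x)) * ee (-(2*M)) x
        + (lval q x * (starRingEnd ℂ) (lval q x)) * ee (-(2*M)) x)) = 0 := by
    have heq : ∀ x : ℝ, (lval p x * (starRingEnd ℂ) (lval p x)) * ee (-(2*M)) x
        + (lval q x * (starRingEnd ℂ) (lval q x)) * ee (-(2*M)) x = ee (-(2*M)) x := by
      intro x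
      rw [← add_mul, key x, one_mul]
    simp only [heq]
    rw [integral_ee, if_neg (by omega)]
  rw [intervalIntegral.integral_add i1 i2, prod_int p M hM hdp, prod_int q M hM hdq] at hI
  have h2 : (4 * (Real.pi:ℂ)) * (p M * (starRingEnd ℂ) (p (-M)) + q M * (starRingEnd ℂ) (q (-M))) = 0 := by
    linear_combination hI
  rcases mul_eq_zero.mp h2 with h1 | h1
  · exact absurd h1 (by simp [Real.pi_ne_zero])
  · exact h1

lemma ee_one (x : ℝ) : ee 1 x = Complex.exp (Complex.I * x / 2) := by
  rw [ee]; norm_num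

lemma ee_neg_one (x : ℝ) : ee (-1) x = Complex.exp (-(Complex.I * x / 2)) := by
  rw [ee]; push_cast; ring_nf

noncomputable def stepP (P Q : ℂ) (Θ Φ x : ℝ) : ℂ :=
  Complex.exp (-(Complex.I * Φ / 2)) *
    ((Real.cos (Θ/2) : ℂ) * ee (-1) x * P - (Real.sin (Θ/2) : ℂ) * ee 1 x * Q)

noncomputable def stepQ (P Q : ℂ) (Θ Φ x : ℝ) : ℂ :=
  Complex.exp (Complex.I * Φ / 2) *
    ((Real.sin (Θ/2) : ℂ) * ee (-1) x * P + (Real.cos (Θ/2) : ℂ) * ee 1 x * Q)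

lemma step_mat (P Q : ℂ) (Θ Φ x : ℝ) :
    !![P, -Q; (starRingEnd ℂ) Q, (starRingEnd ℂ) P] * (Rz x * Ry Θ * Rz Φ)
    = !![stepP P Q Θ Φ x, -(stepQ P Q Θ Φ x);
        (starRingEnd ℂ) (stepQ P Q Θ Φ x), (starRingEnd ℂ) (stepP P Q Θ Φ x)] := by
  rw [Rz, Ry, Rz, Matrix.mul_fin_two, Matrix.mul_fin_two, Matrix.mul_fin_two]
  have hc : ∀ t : ℝ, (starRingEnd ℂ) (Complex.exp (Complex.I * t / 2))
      = Complex.exp (-(Complex.I * t / 2)) := by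
    intro t
    rw [← Complex.exp_conj]
    congr 1
    simp [map_div₀, Complex.conj_I, map_ofNat]
    ring
  have hc' : ∀ t : ℝ, (starRingEnd ℂ) (Complex.exp (-(Complex.I * t / 2)))
      = Complex.exp (Complex.I * t / 2) := by
    intro t
    rw [← Complex.exp_conj]
    congr 1
    simp [map_div₀, Complex.conj_I, map_ofNat]
    ring
  ext i j
  fin_cases i <;> fin_cases j <;>
    simp only [stepP, stepQ, ee_one, ee_neg_one, map_mul, map_add, map_sub, map_neg,
      hc, hc', Complex.conj_ofReal, Matrix.cons_val', Matrix.cons_val_zero,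
      Matrix.cons_val_one, Matrix.head_cons, Matrix.empty_val', Matrix.cons_val_fin_one,
      Matrix.head_fin_const, Fin.mk_zero, Fin.mk_one, Fin.isValue] <;>
    ring

lemma Wqsp_zero (ω : ℝ) (θ φ : ℕ → ℝ) (x : ℝ) :
    Wqsp 0 ω θ φ x = Rz ω * Ry (θ 0) * Rz (φ 0) := by
  rw [Wqsp]
  simp

lemma Wqsp_succ (L : ℕ) (ω : ℝ) (θ φ : ℕ → ℝ) (x : ℝ) :
    Wqsp (L + 1) ω θ φ x = Wqsp L ω θ φ x * (Rz x * Ry (θ (L + 1)) * Rz (φ (L + 1))) := by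
  rw [Wqsp, Wqsp, List.range_succ, List.map_append, List.prod_append]
  simp [mul_assoc]

lemma Wqsp_congr (L : ℕ) (ω : ℝ) (θ θ' φ φ' : ℕ → ℝ) (x : ℝ)
    (hθ : ∀ n ≤ L, θ n = θ' n) (hφ : ∀ n ≤ L, φ n = φ' n) :
    Wqsp L ω θ φ x = Wqsp L ω θ' φ' x := by
  have hlist : (List.range L).map (fun l => Rz x * Ry (θ (l+1)) * Rz (φ (l+1)))
      = (List.range L).map (fun l => Rz x * Ry (θ' (l+1)) * Rz (φ' (l+1))) := by
    apply List.map_congr_left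
    intro l hl
    rw [List.mem_range] at hl
    rw [hθ (l+1) (by omega), hφ (l+1) (by omega)]
  rw [Wqsp, Wqsp, hθ 0 (Nat.zero_le _), hφ 0 (Nat.zero_le _), hlist]

lemma det_Wqsp (L : ℕ) (ω : ℝ) (θ φ : ℕ → ℝ) (x : ℝ) :
    (Wqsp L ω θ φ x).det = 1 := by
  have hz : ∀ t : ℝ, (Rz t).det = 1 := by
    intro t
    rw [Rz, Matrix.det_fin_two_of, ← Complex.exp_add]
    simp
  have hy : ∀ t : ℝ, (Ry t).det = 1 := by
    intro t
    rw [Ry, Matrix.det_fin_two_of]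
    norm_cast
    nlinarith [Real.sin_sq_add_cos_sq (t / 2)]
  induction L with
  | zero =>
    rw [Wqsp_zero, Matrix.det_mul, Matrix.det_mul, hz, hy, hz]; norm_num
  | succ n ih =>
    rw [Wqsp_succ, Matrix.det_mul, ih, Matrix.det_mul, Matrix.det_mul, hz, hy, hz]; norm_num

lemma conj_exp_half (t : ℝ) : (starRingEnd ℂ) (Complex.exp (Complex.I * t / 2))
    = Complex.exp (-(Complex.I * t / 2)) := by
  rw [← Complex.exp_conj]
  congr 1
  simp [map_div₀, Complex.conj_I, map_ofNat]
  ring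

lemma conj_exp_half' (t : ℝ) : (starRingEnd ℂ) (Complex.exp (-(Complex.I * t / 2)))
    = Complex.exp (Complex.I * t / 2) := by
  rw [← Complex.exp_conj]
  congr 1
  simp [map_div₀, Complex.conj_I, map_ofNat]
  ring

lemma mul_conj'' (z : ℂ) : z * (starRingEnd ℂ) z = ((‖z‖^2 : ℝ) : ℂ) := by
  rw [Complex.mul_conj, Complex.normSq_eq_norm_sq]

lemma hfg_lemma (Φ : ℝ) : Complex.exp (Complex.I * Φ / 2) * Complex.exp (-(Complex.I * Φ / 2)) = 1 := by
  rw [← Complex.exp_add, show Complex.I * Φ / 2 + -(Complex.I * Φ / 2) = 0 by ring, Complex.exp_zero]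

lemma hab_lemma (x : ℝ) : ee 1 x * ee (-1) x = 1 := by
  rw [← ee_add, show (1 : ℤ) + (-1) = 0 by ring, ee_zero]

lemma hcs_lemma (Θ : ℝ) : ((Real.cos (Θ/2) : ℂ))^2 + ((Real.sin (Θ/2) : ℂ))^2 = 1 := by
  norm_cast
  rw [add_comm]
  exact Real.sin_sq_add_cos_sq _

noncomputable def fwdP (Θ Φ : ℝ) (p q : ℤ → ℂ) : ℤ → ℂ := fun j =>
  (Complex.exp (-(Complex.I * Φ / 2)) * (Real.cos (Θ/2) : ℂ)) * p (j - (-1)) +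
  (-(Complex.exp (-(Complex.I * Φ / 2)) * (Real.sin (Θ/2) : ℂ))) * q (j - 1)

noncomputable def fwdQ (Θ Φ : ℝ) (p q : ℤ → ℂ) : ℤ → ℂ := fun j =>
  (Complex.exp (Complex.I * Φ / 2) * (Real.sin (Θ/2) : ℂ)) * p (j - (-1)) +
  (Complex.exp (Complex.I * Φ / 2) * (Real.cos (Θ/2) : ℂ)) * q (j - 1)

noncomputable def bwdP (Θ Φ : ℝ) (p q : ℤ → ℂ) : ℤ → ℂ := fun j =>
  ((Real.cos (Θ/2) : ℂ) * Complex.exp (Complex.I * Φ / 2)) * p (j - 1) +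
  ((Real.sin (Θ/2) : ℂ) * Complex.exp (-(Complex.I * Φ / 2))) * q (j - 1)

noncomputable def bwdQ (Θ Φ : ℝ) (p q : ℤ → ℂ) : ℤ → ℂ := fun j =>
  ((Real.cos (Θ/2) : ℂ) * Complex.exp (-(Complex.I * Φ / 2))) * q (j - (-1)) +
  (-((Real.sin (Θ/2) : ℂ) * Complex.exp (Complex.I * Φ / 2))) * p (j - (-1))

lemma lval_fwdP (Θ Φ : ℝ) (p q : ℤ → ℂ) (hp : (Function.support p).Finite)
    (hq : (Function.support q).Finite) (x : ℝ) :
    lval (fwdP Θ Φ p q) x = stepP (lval p x) (lval q x) Θ Φ x := by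
  unfold fwdP
  rw [lval_comb _ _ _ _ p q hp hq x, stepP]
  ring

lemma lval_fwdQ (Θ Φ : ℝ) (p q : ℤ → ℂ) (hp : (Function.support p).Finite)
    (hq : (Function.support q).Finite) (x : ℝ) :
    lval (fwdQ Θ Φ p q) x = stepQ (lval p x) (lval q x) Θ Φ x := by
  unfold fwdQ
  rw [lval_comb _ _ _ _ p q hp hq x, stepQ]
  ring

lemma lval_bwdP (Θ Φ : ℝ) (p q : ℤ → ℂ) (hp : (Function.support p).Finite)
    (hq : (Function.support q).Finite) (x : ℝ) :
    lval (bwdP Θ Φ p q) x = ee 1 x *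
      ((Real.cos (Θ/2) : ℂ) * Complex.exp (Complex.I * Φ / 2) * lval p x +
       (Real.sin (Θ/2) : ℂ) * Complex.exp (-(Complex.I * Φ / 2)) * lval q x) := by
  unfold bwdP
  rw [lval_comb _ _ _ _ p q hp hq x]
  ring

lemma lval_bwdQ (Θ Φ : ℝ) (p q : ℤ → ℂ) (hp : (Function.support p).Finite)
    (hq : (Function.support q).Finite) (x : ℝ) :
    lval (bwdQ Θ Φ p q) x = ee (-1) x *
      ((Real.cos (Θ/2) : ℂ) * Complex.exp (-(Complex.I * Φ / 2)) * lval q x -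
       (Real.sin (Θ/2) : ℂ) * Complex.exp (Complex.I * Φ / 2) * lval p x) := by
  unfold bwdQ
  rw [lval_comb _ _ _ _ q p hq hp x]
  ring

lemma bwd_stepP (P Q : ℂ) (Θ Φ x : ℝ) :
    stepP (ee 1 x * ((Real.cos (Θ/2) : ℂ) * Complex.exp (Complex.I * Φ / 2) * P +
        (Real.sin (Θ/2) : ℂ) * Complex.exp (-(Complex.I * Φ / 2)) * Q))
      (ee (-1) x * ((Real.cos (Θ/2) : ℂ) * Complex.exp (-(Complex.I * Φ / 2)) * Q -
        (Real.sin (Θ/2) : ℂ) * Complex.exp (Complex.I * Φ / 2) * P)) Θ Φ x = P := by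
  rw [stepP, show Complex.exp (-(Complex.I * ↑Φ / 2)) *
      ((Real.cos (Θ/2) : ℂ) * ee (-1) x * (ee 1 x * ((Real.cos (Θ/2) : ℂ) * Complex.exp (Complex.I * Φ / 2) * P +
        (Real.sin (Θ/2) : ℂ) * Complex.exp (-(Complex.I * Φ / 2)) * Q)) -
       (Real.sin (Θ/2) : ℂ) * ee 1 x * (ee (-1) x * ((Real.cos (Θ/2) : ℂ) * Complex.exp (-(Complex.I * Φ / 2)) * Q -
        (Real.sin (Θ/2) : ℂ) * Complex.exp (Complex.I * Φ / 2) * P)))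
      = (Complex.exp (Complex.I * Φ / 2) * Complex.exp (-(Complex.I * Φ / 2))) *
        ((ee 1 x * ee (-1) x) * ((((Real.cos (Θ/2) : ℂ))^2 + ((Real.sin (Θ/2) : ℂ))^2) * P)) from by ring,
    hfg_lemma, hab_lemma, hcs_lemma]
  ring

lemma bwd_stepQ (P Q : ℂ) (Θ Φ x : ℝ) :
    stepQ (ee 1 x * ((Real.cos (Θ/2) : ℂ) * Complex.exp (Complex.I * Φ / 2) * P +
        (Real.sin (Θ/2) : ℂ) * Complex.exp (-(Complex.I * Φ / 2)) * Q))
      (ee (-1) x * ((Real.cos (Θ/2) : ℂ) * Complex.exp (-(Complex.I * Φ / 2)) * Q -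
        (Real.sin (Θ/2) : ℂ) * Complex.exp (Complex.I * Φ / 2) * P)) Θ Φ x = Q := by
  rw [stepQ, show Complex.exp (Complex.I * ↑Φ / 2) *
      ((Real.sin (Θ/2) : ℂ) * ee (-1) x * (ee 1 x * ((Real.cos (Θ/2) : ℂ) * Complex.exp (Complex.I * Φ / 2) * P +
        (Real.sin (Θ/2) : ℂ) * Complex.exp (-(Complex.I * Φ / 2)) * Q)) +
       (Real.cos (Θ/2) : ℂ) * ee 1 x * (ee (-1) x * ((Real.cos (Θ/2) : ℂ) * Complex.exp (-(Complex.I * Φ / 2)) * Q -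
        (Real.sin (Θ/2) : ℂ) * Complex.exp (Complex.I * Φ / 2) * P)))
      = (Complex.exp (Complex.I * Φ / 2) * Complex.exp (-(Complex.I * Φ / 2))) *
        ((ee 1 x * ee (-1) x) * ((((Real.cos (Θ/2) : ℂ))^2 + ((Real.sin (Θ/2) : ℂ))^2) * Q)) from by ring,
    hfg_lemma, hab_lemma, hcs_lemma]
  ring

lemma bwd_norm (Θ Φ : ℝ) (p q : ℤ → ℂ) (hp : (Function.support p).Finite)
    (hq : (Function.support q).Finite)
    (hnorm : ∀ x : ℝ, ‖lval p x‖ ^ 2 + ‖lval q x‖ ^ 2 = 1) (x : ℝ) :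
    ‖lval (bwdP Θ Φ p q) x‖ ^ 2 + ‖lval (bwdQ Θ Φ p q) x‖ ^ 2 = 1 := by
  have hC : lval (bwdP Θ Φ p q) x * (starRingEnd ℂ) (lval (bwdP Θ Φ p q) x)
      + lval (bwdQ Θ Φ p q) x * (starRingEnd ℂ) (lval (bwdQ Θ Φ p q) x)
      = lval p x * (starRingEnd ℂ) (lval p x) + lval q x * (starRingEnd ℂ) (lval q x) := by
    rw [lval_bwdP Θ Φ p q hp hq x, lval_bwdQ Θ Φ p q hp hq x]
    simp only [map_mul, map_add, map_sub, map_neg, ee_conj, conj_exp_half, conj_exp_half', neg_neg,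
      Complex.conj_ofReal]
    rw [show (ee 1 x * ((Real.cos (Θ/2) : ℂ) * Complex.exp (Complex.I * Φ / 2) * lval p x +
        (Real.sin (Θ/2) : ℂ) * Complex.exp (-(Complex.I * Φ / 2)) * lval q x)) *
        (ee (-1) x * ((Real.cos (Θ/2) : ℂ) * Complex.exp (-(Complex.I * Φ / 2)) * (starRingEnd ℂ) (lval p x) +
        (Real.sin (Θ/2) : ℂ) * Complex.exp (Complex.I * Φ / 2) * (starRingEnd ℂ) (lval q x))) +
        (ee (-1) x * ((Real.cos (Θ/2) : ℂ) * Complex.exp (-(Complex.I * Φ / 2)) * lval q x -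
        (Real.sin (Θ/2) : ℂ) * Complex.exp (Complex.I * Φ / 2) * lval p x)) *
        (ee 1 x * ((Real.cos (Θ/2) : ℂ) * Complex.exp (Complex.I * Φ / 2) * (starRingEnd ℂ) (lval q x) -
        (Real.sin (Θ/2) : ℂ) * Complex.exp (-(Complex.I * Φ / 2)) * (starRingEnd ℂ) (lval p x)))
      = (Complex.exp (Complex.I * Φ / 2) * Complex.exp (-(Complex.I * Φ / 2))) *
        ((ee 1 x * ee (-1) x) * ((((Real.cos (Θ/2) : ℂ))^2 + ((Real.sin (Θ/2) : ℂ))^2) *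
          (lval p x * (starRingEnd ℂ) (lval p x) + lval q x * (starRingEnd ℂ) (lval q x)))) from by ring,
      hfg_lemma, hab_lemma, hcs_lemma]
    ring
  rw [mul_conj'', mul_conj'', mul_conj'', mul_conj''] at hC
  have h2 : (‖lval (bwdP Θ Φ p q) x‖^2 + ‖lval (bwdQ Θ Φ p q) x‖^2 : ℝ)
      = ‖lval p x‖^2 + ‖lval q x‖^2 := by exact_mod_cast hC
  rw [h2, hnorm x]

lemma sq_abs_c (z : ℂ) : ((‖z‖ : ℝ) : ℂ)^2 = z * (starRingEnd ℂ) z := by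
  rw [← Complex.ofReal_pow, Complex.sq_norm, Complex.mul_conj]

lemma choose_csw (u v u' v' : ℂ)
    (horth : u * (starRingEnd ℂ) u' + v * (starRingEnd ℂ) v' = 0) :
    ∃ (c s : ℝ) (w : ℂ), c^2 + s^2 = 1 ∧ ‖w‖ = 1 ∧
      (c : ℂ) * w * u + (s : ℂ) * v = 0 ∧ (c : ℂ) * v' - (s : ℂ) * w * u' = 0 := by
  have horth' : (starRingEnd ℂ) u * u' + (starRingEnd ℂ) v * v' = 0 := by
    have := congrArg (starRingEnd ℂ) horth
    simpa using this
  by_cases hu : u = 0 <;> by_cases hv : v = 0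
  · -- u = 0, v = 0
    by_cases hu' : u' = 0
    · exact ⟨0, 1, 1, by norm_num, by simp, by simp [hu, hv], by simp [hu']⟩
    · by_cases hv' : v' = 0
      · exact ⟨1, 0, 1, by norm_num, by simp, by simp [hu, hv], by simp [hv']⟩
      · set r : ℝ := Real.sqrt (‖u'‖ ^ 2 + ‖v'‖ ^ 2) with hr
        have hau : 0 < ‖u'‖ := norm_pos_iff.mpr hu'
        have hav : 0 < ‖v'‖ := norm_pos_iff.mpr hv'
        have hrpos : 0 < r := Real.sqrt_pos.mpr (by positivity)
        have hr2 : r^2 = ‖u'‖ ^ 2 + ‖v'‖ ^ 2 :=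
          Real.sq_sqrt (by positivity)
        refine ⟨‖u'‖ / r, ‖v'‖ / r,
          ((‖u'‖ : ℂ) * v') / ((‖v'‖ : ℂ) * u'), ?_, ?_, ?_, ?_⟩
        · field_simp
          linarith [hr2]
        · rw [norm_div, norm_mul, norm_mul, Complex.norm_real, Complex.norm_real,
            norm_norm, norm_norm]
          rw [div_eq_one_iff_eq (by positivity)]
          ring
        · simp [hu, hv]
        · have h1 : ((r:ℝ):ℂ) ≠ 0 := Complex.ofReal_ne_zero.mpr hrpos.ne'
          have h2 : ((‖v'‖ : ℝ):ℂ) ≠ 0 := Complex.ofReal_ne_zero.mpr hav.ne'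
          push_cast
          field_simp
          ring
  · -- u = 0, v ≠ 0
    have hv' : v' = 0 := by
      rw [hu] at horth
      simp at horth
      rcases horth with h | h
      · exact absurd h hv
      · simpa using congrArg (starRingEnd ℂ) h
    exact ⟨1, 0, 1, by norm_num, by simp, by simp [hu], by simp [hv']⟩
  · -- u ≠ 0, v = 0
    have hu' : u' = 0 := by
      rw [hv] at horth
      simp at horth
      rcases horth with h | h
      · exact absurd h hu
      · simpa using congrArg (starRingEnd ℂ) h
    exact ⟨0, 1, 1, by norm_num, by simp, by simp [hv], by simp [hu']⟩
  · -- u ≠ 0, v ≠ 0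
    set r : ℝ := Real.sqrt (‖u‖ ^ 2 + ‖v‖ ^ 2) with hr
    have hau : 0 < ‖u‖ := norm_pos_iff.mpr hu
    have hav : 0 < ‖v‖ := norm_pos_iff.mpr hv
    have hrpos : 0 < r := Real.sqrt_pos.mpr (by positivity)
    have hr2 : r^2 = ‖u‖ ^ 2 + ‖v‖ ^ 2 := Real.sq_sqrt (by positivity)
    refine ⟨‖v‖ / r, ‖u‖ / r,
      -(((‖u‖ : ℂ) * v) / ((‖v‖ : ℂ) * u)), ?_, ?_, ?_, ?_⟩
    · field_simp
      linarith [hr2]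
    · rw [norm_neg, norm_div, norm_mul, norm_mul, Complex.norm_real,
        Complex.norm_real, norm_norm, norm_norm]
      rw [div_eq_one_iff_eq (by positivity)]
      ring
    · have h1 : ((r:ℝ):ℂ) ≠ 0 := Complex.ofReal_ne_zero.mpr hrpos.ne'
      have h2 : ((‖v‖ : ℝ):ℂ) ≠ 0 := Complex.ofReal_ne_zero.mpr hav.ne'
      push_cast
      field_simp
      ring
    · have h1 : ((r:ℝ):ℂ) ≠ 0 := Complex.ofReal_ne_zero.mpr hrpos.ne'
      have h2 : ((‖v‖ : ℝ):ℂ) ≠ 0 := Complex.ofReal_ne_zero.mpr hav.ne'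
      push_cast
      field_simp
      linear_combination (u * v) * horth' + (u * v') * sq_abs_c v + (v * u') * sq_abs_c u

lemma realize_cs (c s : ℝ) (hcs : c^2 + s^2 = 1) :
    ∃ Θ : ℝ, Real.cos (Θ / 2) = c ∧ Real.sin (Θ / 2) = s := by
  set z : ℂ := (c : ℂ) + (s : ℂ) * Complex.I with hz
  have habs2 : ‖z‖ ^ 2 = 1 := by
    rw [Complex.sq_norm, hz, Complex.normSq_add_mul_I, hcs]
  have habs : ‖z‖ = 1 := by
    nlinarith [norm_nonneg z]
  have hz0 : z ≠ 0 := by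
    intro h
    rw [h] at habs
    simp at habs
  refine ⟨2 * Complex.arg z, ?_, ?_⟩
  · rw [show 2 * Complex.arg z / 2 = Complex.arg z by ring, Complex.cos_arg hz0, habs]
    simp [hz]
  · rw [show 2 * Complex.arg z / 2 = Complex.arg z by ring, Complex.sin_arg, habs]
    simp [hz]

lemma realize_w (w : ℂ) (hw : ‖w‖ = 1) :
    ∃ Φ : ℝ, Complex.exp (Complex.I * Φ / 2) * Complex.exp (Complex.I * Φ / 2) = w := by
  refine ⟨Complex.arg w, ?_⟩
  rw [← Complex.exp_add, show Complex.I * (Complex.arg w : ℂ) / 2 + Complex.I * (Complex.arg w : ℂ) / 2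
    = (Complex.arg w : ℂ) * Complex.I by ring]
  conv_rhs => rw [← Complex.norm_mul_exp_arg_mul_I w]
  rw [hw]
  simp

lemma choose_angles (u v u' v' : ℂ)
    (horth : u * (starRingEnd ℂ) u' + v * (starRingEnd ℂ) v' = 0) :
    ∃ Θ Φ : ℝ,
      ((Real.cos (Θ/2) : ℂ) * Complex.exp (Complex.I * Φ / 2) * u
        + (Real.sin (Θ/2) : ℂ) * Complex.exp (-(Complex.I * Φ / 2)) * v = 0) ∧
      ((Real.cos (Θ/2) : ℂ) * Complex.exp (-(Complex.I * Φ / 2)) * v'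
        - (Real.sin (Θ/2) : ℂ) * Complex.exp (Complex.I * Φ / 2) * u' = 0) := by
  obtain ⟨c, s, w, hcs, hw, h1, h2⟩ := choose_csw u v u' v' horth
  obtain ⟨Θ, hcos, hsin⟩ := realize_cs c s hcs
  obtain ⟨Φ, hw2⟩ := realize_w w hw
  have hwg : w * Complex.exp (-(Complex.I * Φ / 2)) = Complex.exp (Complex.I * Φ / 2) := by
    rw [← hw2, mul_assoc, hfg_lemma, mul_one]
  refine ⟨Θ, Φ, ?_, ?_⟩
  · rw [hcos, hsin]
    linear_combination Complex.exp (-(Complex.I * Φ / 2)) * h1 - ((c:ℂ) * u) * hwg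
  · rw [hcos, hsin]
    linear_combination Complex.exp (-(Complex.I * Φ / 2)) * h2 + ((s:ℂ) * u') * hwg

lemma lval_delta (a : ℂ) (x : ℝ) : lval (fun j => if j = 0 then a else 0) x = a := by
  rw [lval_eq_sum _ (s := {0}) (fun j hj => by
    simp only [Finset.mem_singleton]
    by_contra hc
    rw [if_neg hc] at hj
    exact hj rfl) x]
  simp [ee_zero]

lemma forward (L : ℕ) (ω : ℝ) (θ φ : ℕ → ℝ) :
    ∃ p q : ℤ → ℂ, (Function.support p).Finite ∧ (Function.support q).Finite ∧
      (∀ j : ℤ, (L : ℤ) < |j| → p j = 0) ∧ (∀ j : ℤ, (L : ℤ) < |j| → q j = 0) ∧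
      (∀ j : ℤ, j % 2 ≠ (L : ℤ) % 2 → p j = 0) ∧ (∀ j : ℤ, j % 2 ≠ (L : ℤ) % 2 → q j = 0) ∧
      ∀ x : ℝ, Wqsp L ω θ φ x =
        !![lval p x, -(lval q x); (starRingEnd ℂ) (lval q x), (starRingEnd ℂ) (lval p x)] := by
  induction L with
  | zero =>
    refine ⟨fun j => if j = 0 then
        Complex.exp (-(Complex.I*ω/2)) * (Real.cos (θ 0/2):ℂ) * Complex.exp (-(Complex.I*(φ 0)/2)) else 0,
      fun j => if j = 0 then
        Complex.exp (-(Complex.I*ω/2)) * (Real.sin (θ 0/2):ℂ) * Complex.exp (Complex.I*(φ 0)/2) else 0,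
      ?_, ?_, ?_, ?_, ?_, ?_, ?_⟩
    · exact (Set.finite_singleton 0).subset (fun j hj => by
        simp only [Function.mem_support] at hj
        by_contra hc
        simp only [Set.mem_singleton_iff] at hc
        exact hj (if_neg hc))
    · exact (Set.finite_singleton 0).subset (fun j hj => by
        simp only [Function.mem_support] at hj
        by_contra hc
        simp only [Set.mem_singleton_iff] at hc
        exact hj (if_neg hc))
    · intro j hj; rw [lt_abs] at hj; exact if_neg (by push_cast at hj; omega)
    · intro j hj; rw [lt_abs] at hj; exact if_neg (by push_cast at hj; omega)
    · intro j hj; exact if_neg (by push_cast at hj; omega)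
    · intro j hj; exact if_neg (by push_cast at hj; omega)
    · intro x
      rw [Wqsp_zero, lval_delta, lval_delta, Rz, Ry, Rz, Matrix.mul_fin_two, Matrix.mul_fin_two]
      ext i j
      fin_cases i <;> fin_cases j <;>
        simp only [map_mul, map_add, map_sub, map_neg, conj_exp_half, conj_exp_half',
          Complex.conj_ofReal, Matrix.cons_val', Matrix.cons_val_zero, Matrix.cons_val_one,
          Matrix.head_cons, Matrix.empty_val', Matrix.cons_val_fin_one, Matrix.head_fin_const,
          Fin.mk_zero, Fin.mk_one, Fin.isValue] <;>
        ring
  | succ n ih =>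
    obtain ⟨p, q, hpf, hqf, hdp, hdq, hpp, hqp, hmat⟩ := ih
    refine ⟨fwdP (θ (n+1)) (φ (n+1)) p q, fwdQ (θ (n+1)) (φ (n+1)) p q,
      comb_support_finite _ _ _ _ p q hpf hqf, comb_support_finite _ _ _ _ p q hpf hqf,
      ?_, ?_, ?_, ?_, ?_⟩
    · intro j hj
      push_cast at hj
      rw [lt_abs] at hj
      have e1 : (n:ℤ) < |j - (-1)| := by rw [lt_abs]; omega
      have e2 : (n:ℤ) < |j - 1| := by rw [lt_abs]; omega
      show _ * p (j - (-1)) + _ * q (j - 1) = 0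
      rw [hdp _ e1, hdq _ e2]
      ring
    · intro j hj
      push_cast at hj
      rw [lt_abs] at hj
      have e1 : (n:ℤ) < |j - (-1)| := by rw [lt_abs]; omega
      have e2 : (n:ℤ) < |j - 1| := by rw [lt_abs]; omega
      show _ * p (j - (-1)) + _ * q (j - 1) = 0
      rw [hdp _ e1, hdq _ e2]
      ring
    · intro j hj
      push_cast at hj
      show _ * p (j - (-1)) + _ * q (j - 1) = 0
      rw [hpp (j - (-1)) (by omega), hqp (j - 1) (by omega)]
      ring
    · intro j hj
      push_cast at hj
      show _ * p (j - (-1)) + _ * q (j - 1) = 0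
      rw [hpp (j - (-1)) (by omega), hqp (j - 1) (by omega)]
      ring
    · intro x
      rw [Wqsp_succ, hmat x, step_mat, lval_fwdP _ _ p q hpf hqf x, lval_fwdQ _ _ p q hpf hqf x]

lemma lval_eq_coeff (p p' : ℤ → ℂ) (hp : (Function.support p).Finite)
    (hp' : (Function.support p').Finite) (h : ∀ x : ℝ, lval p x = lval p' x) :
    ∀ j, p j = p' j := by
  intro j
  have hd := comb_support_finite 1 (-1) 0 0 p p' hp hp'
  have hz : ∀ x : ℝ, lval (fun j => (1:ℂ) * p (j - 0) + (-1:ℂ) * p' (j - 0)) x = 0 := by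
    intro x
    rw [lval_comb 1 (-1) 0 0 p p' hp hp' x, ee_zero, h x]
    ring
  have := lval_coeff_zero _ hd hz j
  simp only [sub_zero, one_mul, neg_one_mul] at this
  linear_combination this

lemma backward : ∀ (L : ℕ) (p q : ℤ → ℂ), (Function.support p).Finite →
    (Function.support q).Finite →
    (∀ j : ℤ, (L : ℤ) < |j| → p j = 0) → (∀ j : ℤ, (L : ℤ) < |j| → q j = 0) →
    (∀ j : ℤ, j % 2 ≠ (L : ℤ) % 2 → p j = 0) → (∀ j : ℤ, j % 2 ≠ (L : ℤ) % 2 → q j = 0) →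
    (∀ x : ℝ, ‖lval p x‖ ^ 2 + ‖lval q x‖ ^ 2 = 1) →
    ∃ (ω : ℝ) (θ φ : ℕ → ℝ), ∀ x : ℝ, Wqsp L ω θ φ x =
      !![lval p x, -(lval q x); (starRingEnd ℂ) (lval q x), (starRingEnd ℂ) (lval p x)] := by
  intro L
  induction L with
  | zero =>
    intro p q hp hq hdp hdq hpp hqp hnorm
    have hlp : ∀ x : ℝ, lval p x = p 0 := by
      intro x
      rw [lval_eq_sum p (s := {0}) (fun j hj => by
        simp only [Finset.mem_singleton]
        by_contra hc
        exact hj (hdp j (by rw [lt_abs]; push_cast; omega))) x]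
      simp [ee_zero]
    have hlq : ∀ x : ℝ, lval q x = q 0 := by
      intro x
      rw [lval_eq_sum q (s := {0}) (fun j hj => by
        simp only [Finset.mem_singleton]
        by_contra hc
        exact hj (hdq j (by rw [lt_abs]; push_cast; omega))) x]
      simp [ee_zero]
    have habs : ‖p 0‖ ^ 2 + ‖q 0‖ ^ 2 = 1 := by
      have := hnorm 0
      rw [hlp 0, hlq 0] at this
      simpa using this
    obtain ⟨Θ, hcos, hsin⟩ := realize_cs (‖p 0‖) (‖q 0‖) habs
    set A := Complex.arg (p 0) with hA
    set B := Complex.arg (q 0) with hB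
    refine ⟨-(A + B), fun _ => Θ, fun _ => B - A, ?_⟩
    intro x
    have e1 : Complex.exp (-(Complex.I * ((-(A+B) : ℝ) : ℂ) / 2)) *
        Complex.exp (-(Complex.I * ((B - A : ℝ) : ℂ) / 2)) = Complex.exp ((A : ℂ) * Complex.I) := by
      rw [← Complex.exp_add]
      congr 1
      push_cast
      ring
    have e2 : Complex.exp (-(Complex.I * ((-(A+B) : ℝ) : ℂ) / 2)) *
        Complex.exp (Complex.I * ((B - A : ℝ) : ℂ) / 2) = Complex.exp ((B : ℂ) * Complex.I) := by
      rw [← Complex.exp_add]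
      congr 1
      push_cast
      ring
    have key1 : Complex.exp (-(Complex.I * ((-(A+B) : ℝ) : ℂ) / 2)) * (Real.cos (Θ/2) : ℂ) *
        Complex.exp (-(Complex.I * ((B - A : ℝ) : ℂ) / 2)) = p 0 := by
      rw [hcos]
      conv_rhs => rw [← Complex.norm_mul_exp_arg_mul_I (p 0), ← hA]
      linear_combination ((‖p 0‖ : ℝ) : ℂ) * e1
    have key2 : Complex.exp (-(Complex.I * ((-(A+B) : ℝ) : ℂ) / 2)) * (Real.sin (Θ/2) : ℂ) *
        Complex.exp (Complex.I * ((B - A : ℝ) : ℂ) / 2) = q 0 := by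
      rw [hsin]
      conv_rhs => rw [← Complex.norm_mul_exp_arg_mul_I (q 0), ← hB]
      linear_combination ((‖q 0‖ : ℝ) : ℂ) * e2
    rw [Wqsp_zero, hlp x, hlq x]
    conv_rhs => rw [← key1, ← key2]
    rw [Rz, Ry, Rz, Matrix.mul_fin_two, Matrix.mul_fin_two]
    ext i j
    fin_cases i <;> fin_cases j <;>
      simp only [map_mul, map_add, map_sub, map_neg, conj_exp_half, conj_exp_half',
        Complex.conj_ofReal, Matrix.cons_val', Matrix.cons_val_zero, Matrix.cons_val_one,
        Matrix.head_cons, Matrix.empty_val', Matrix.cons_val_fin_one, Matrix.head_fin_const,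
        Fin.mk_zero, Fin.mk_one, Fin.isValue] <;>
      ring
  | succ n ih =>
    intro p q hp hq hdp hdq hpp hqp hnorm
    have hdp' : ∀ j : ℤ, (n:ℤ)+1 < |j| → p j = 0 := by
      intro j hj; apply hdp; push_cast; omega
    have hdq' : ∀ j : ℤ, (n:ℤ)+1 < |j| → q j = 0 := by
      intro j hj; apply hdq; push_cast; omega
    have horth := ortho p q hp hq ((n:ℤ)+1) (by omega) hdp' hdq' hnorm
    obtain ⟨Θ, Φ, h1, h2⟩ := choose_angles (p ((n:ℤ)+1)) (q ((n:ℤ)+1))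
      (p (-((n:ℤ)+1))) (q (-((n:ℤ)+1))) horth
    set p' := bwdP Θ Φ p q with hp'def
    set q' := bwdQ Θ Φ p q with hq'def
    have hp'f : (Function.support p').Finite := comb_support_finite _ _ _ _ p q hp hq
    have hq'f : (Function.support q').Finite := comb_support_finite _ _ _ _ q p hq hp
    have hdegp' : ∀ j : ℤ, (n:ℤ) < |j| → p' j = 0 := by
      intro j hj
      rw [lt_abs] at hj
      show _ * p (j - 1) + _ * q (j - 1) = 0
      by_cases hj1 : j = (n:ℤ)+2
      · rw [show j - 1 = (n:ℤ)+1 by omega]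
        linear_combination h1
      · by_cases hj2 : j = (n:ℤ)+1
        · rw [hpp (j-1) (by push_cast; omega), hqp (j-1) (by push_cast; omega)]
          ring
        · rw [hdp' (j-1) (by rw [lt_abs]; omega), hdq' (j-1) (by rw [lt_abs]; omega)]
          ring
    have hdegq' : ∀ j : ℤ, (n:ℤ) < |j| → q' j = 0 := by
      intro j hj
      rw [lt_abs] at hj
      show _ * q (j - (-1)) + _ * p (j - (-1)) = 0
      by_cases hj1 : j = -((n:ℤ)+2)
      · rw [show j - (-1) = -((n:ℤ)+1) by omega]
        linear_combination h2
      · by_cases hj2 : j = -((n:ℤ)+1)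
        · rw [hpp (j-(-1)) (by push_cast; omega), hqp (j-(-1)) (by push_cast; omega)]
          ring
        · rw [hdp' (j-(-1)) (by rw [lt_abs]; omega), hdq' (j-(-1)) (by rw [lt_abs]; omega)]
          ring
    have hparp' : ∀ j : ℤ, j % 2 ≠ (n:ℤ) % 2 → p' j = 0 := by
      intro j hj
      show _ * p (j - 1) + _ * q (j - 1) = 0
      rw [hpp (j-1) (by push_cast; omega), hqp (j-1) (by push_cast; omega)]
      ring
    have hparq' : ∀ j : ℤ, j % 2 ≠ (n:ℤ) % 2 → q' j = 0 := by
      intro j hj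
      show _ * q (j - (-1)) + _ * p (j - (-1)) = 0
      rw [hpp (j-(-1)) (by push_cast; omega), hqp (j-(-1)) (by push_cast; omega)]
      ring
    have hnorm' : ∀ x : ℝ, ‖lval p' x‖ ^ 2 + ‖lval q' x‖ ^ 2 = 1 :=
      fun x => bwd_norm Θ Φ p q hp hq hnorm x
    obtain ⟨ω, θ', φ', hW⟩ := ih p' q' hp'f hq'f hdegp' hdegq' hparp' hparq' hnorm'
    refine ⟨ω, Function.update θ' (n+1) Θ, Function.update φ' (n+1) Φ, ?_⟩
    intro x
    rw [Wqsp_succ, Function.update_self, Function.update_self,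
      Wqsp_congr n ω _ θ' _ φ' x
        (fun m hm => Function.update_of_ne (by omega) _ _)
        (fun m hm => Function.update_of_ne (by omega) _ _),
      hW x, step_mat]
    have hPv : stepP (lval p' x) (lval q' x) Θ Φ x = lval p x := by
      rw [hp'def, hq'def, lval_bwdP Θ Φ p q hp hq x, lval_bwdQ Θ Φ p q hp hq x]
      exact bwd_stepP (lval p x) (lval q x) Θ Φ x
    have hQv : stepQ (lval p' x) (lval q' x) Θ Φ x = lval q x := by
      rw [hp'def, hq'def, lval_bwdP Θ Φ p q hp hq x, lval_bwdQ Θ Φ p q hp hq x]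
      exact bwd_stepQ (lval p x) (lval q x) Θ Φ x
    rw [hPv, hQv]

end QSPAux

/-- characterization of trigonometric QSP (Lemma 1). -/
theorem stmt_2 (L : ℕ) (p q : ℤ → ℂ)
    (hp : (Function.support p).Finite) (hq : (Function.support q).Finite) :
    (∃ (ω : ℝ) (θ φ : ℕ → ℝ), ∀ x : ℝ,
        Wqsp L ω θ φ x =
          !![lval p x, -(lval q x);
             (starRingEnd ℂ) (lval q x), (starRingEnd ℂ) (lval p x)]) ↔
      ((∀ j : ℤ, (L : ℤ) < |j| → p j = 0) ∧ (∀ j : ℤ, (L : ℤ) < |j| → q j = 0) ∧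
       (∀ j : ℤ, j % 2 ≠ (L : ℤ) % 2 → p j = 0) ∧
       (∀ j : ℤ, j % 2 ≠ (L : ℤ) % 2 → q j = 0) ∧
       (∀ x : ℝ, ‖lval p x‖ ^ 2 + ‖lval q x‖ ^ 2 = 1)) := by
  constructor
  · rintro ⟨ω, θ, φ, hW⟩
    obtain ⟨p', q', hp'f, hq'f, hdp', hdq', hpp', hqp', hmat'⟩ := forward L ω θ φ
    have hpe : ∀ x : ℝ, lval p x = lval p' x := by
      intro x
      have h2 := hmat' x
      rw [hW x] at h2
      have := congrArg (fun M : Matrix (Fin 2) (Fin 2) ℂ => M 0 0) h2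
      simpa using this
    have hqe : ∀ x : ℝ, lval q x = lval q' x := by
      intro x
      have h2 := hmat' x
      rw [hW x] at h2
      have := congrArg (fun M : Matrix (Fin 2) (Fin 2) ℂ => M 0 1) h2
      simpa using this
    have hpc := lval_eq_coeff p p' hp hp'f hpe
    have hqc := lval_eq_coeff q q' hq hq'f hqe
    refine ⟨fun j hj => by rw [hpc j]; exact hdp' j hj,
      fun j hj => by rw [hqc j]; exact hdq' j hj,
      fun j hj => by rw [hpc j]; exact hpp' j hj,
      fun j hj => by rw [hqc j]; exact hqp' j hj, ?_⟩
    intro x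
    have hd := det_Wqsp L ω θ φ x
    rw [hW x, Matrix.det_fin_two_of] at hd
    have hC : ((‖lval p x‖ ^ 2 + ‖lval q x‖ ^ 2 : ℝ) : ℂ) = 1 := by
      rw [Complex.ofReal_add, ← mul_conj'', ← mul_conj'']
      linear_combination hd
    exact_mod_cast hC
  · rintro ⟨hdp, hdq, hpp, hqp, hnorm⟩
    exact backward L p q hp hq hdp hdq hpp hqp hnorm
end
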